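/- arXiv:1409.5611 — 4 statements merged into one kernel-verified Lean document; each statement's English description precedes it below -/
import Mathlib

section
/- Let Ω be a bounded open convex subset of ℝⁿ with Hilbert distance d. If x, y ∈ Ω and z lies on the closed segment [x, y], then d(x,y) = d(x,z) + d(z,y). In particular, the intersection of any Euclidean straight line with Ω is a geodesic for the Hilbert metric. -/
/-- The predicate that `d` is the Hilbert distance of the bounded open convex set `Ω`:
`d x x = 0`, and for distinct `x y ∈ Ω` there are frontier points `x̄` (with `x`
strictly between `x̄` and `y`) and `ȳ` (with `y` strictly between `x` and `ȳ`) such that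
`d x y = log ((‖ȳ - x‖/‖ȳ - y‖) * (‖x̄ - y‖/‖x̄ - x‖))`. -/
def IsHilbertDist {n : ℕ} (Ω : Set (EuclideanSpace ℝ (Fin n)))
    (d : EuclideanSpace ℝ (Fin n) → EuclideanSpace ℝ (Fin n) → ℝ) : Prop :=
  (∀ x, d x x = 0) ∧
  ∀ x ∈ Ω, ∀ y ∈ Ω, x ≠ y →
    ∃ xb ∈ frontier Ω, ∃ yb ∈ frontier Ω,
      x ∈ openSegment ℝ xb y ∧ y ∈ openSegment ℝ x yb ∧
      d x y = Real.log ((‖yb - x‖ / ‖yb - y‖) * (‖xb - y‖ / ‖xb - x‖))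

/-- The `(n+1) × (n+1)` block matrix `[[A, b], [cᵀ, δ]]`. -/
noncomputable def projMat {n : ℕ} (A : Matrix (Fin n) (Fin n) ℝ)
    (b c : EuclideanSpace ℝ (Fin n)) (δ : ℝ) :
    Matrix (Fin n ⊕ Fin 1) (Fin n ⊕ Fin 1) ℝ :=
  Matrix.fromBlocks A (Matrix.replicateCol (Fin 1) b) (Matrix.replicateRow (Fin 1) c) (Matrix.of fun _ _ => δ)

/-- The fractional linear map `x ↦ (A·x + b) / (⟨c,x⟩ + δ)`. -/
noncomputable def fracLin {n : ℕ} (A : Matrix (Fin n) (Fin n) ℝ)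
    (b c : EuclideanSpace ℝ (Fin n)) (δ : ℝ)
    (x : EuclideanSpace ℝ (Fin n)) : EuclideanSpace ℝ (Fin n) :=
  ((∑ i, c i * x i) + δ)⁻¹ • ((WithLp.equiv 2 (Fin n → ℝ)).symm (A.mulVec x) + b)

/-- `f` is the restriction to `U` of a projective transformation of `ℝPⁿ`:
it has fractional linear form `x ↦ (A·x + b)/(⟨c,x⟩ + δ)` on `U`, with the block matrix
`[[A, b],[cᵀ, δ]]` invertible and the denominator nonvanishing on `U`. -/
def IsProjectiveRestriction {n : ℕ} (U : Set (EuclideanSpace ℝ (Fin n)))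
    (f : EuclideanSpace ℝ (Fin n) → EuclideanSpace ℝ (Fin n)) : Prop :=
  ∃ (A : Matrix (Fin n) (Fin n) ℝ) (b c : EuclideanSpace ℝ (Fin n)) (δ : ℝ),
    (projMat A b c δ).det ≠ 0 ∧
    ∀ x ∈ U, ((∑ i, c i * x i) + δ ≠ 0) ∧ f x = fracLin A b c δ x

private lemma seg_right {E : Type*} [NormedAddCommGroup E] [NormedSpace ℝ E] {x y q : E}
    (h : y ∈ openSegment ℝ x q) : ∃ s : ℝ, 1 < s ∧ q = x + s • (y - x) := by
  rw [openSegment_eq_image'] at h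
  obtain ⟨u, hu, huq⟩ := h
  have huq' : x + u • (q - x) = y := huq
  refine ⟨u⁻¹, (one_lt_inv₀ hu.1).2 hu.2, ?_⟩
  have h1 : u • (q - x) = y - x := by rw [← huq']; abel
  have h2 : q - x = u⁻¹ • (y - x) := by
    rw [← h1, smul_smul, inv_mul_cancel₀ hu.1.ne', one_smul]
  rw [← h2]; abel

private lemma seg_left {E : Type*} [NormedAddCommGroup E] [NormedSpace ℝ E] {x y p : E}
    (h : x ∈ openSegment ℝ p y) : ∃ s : ℝ, s < 0 ∧ p = x + s • (y - x) := by
  rw [openSegment_symm] at h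
  obtain ⟨s, hs, hp⟩ := seg_right h
  exact ⟨1 - s, by linarith, by rw [hp]; module⟩

private lemma front_lt {E : Type*} [NormedAddCommGroup E] [NormedSpace ℝ E]
    {Ω : Set E} (hO : IsOpen Ω) (hC : Convex ℝ Ω) {w v : E}
    (hw : w ∈ Ω) {s₁ s₂ : ℝ} (h1 : 0 < s₁) (hlt : s₁ < s₂)
    (hf1 : w + s₁ • v ∈ frontier Ω) (hf2 : w + s₂ • v ∈ frontier Ω) : False := by
  have hs2 : 0 < s₂ := h1.trans hlt
  have hmem : w + s₁ • v ∈ openSegment ℝ w (w + s₂ • v) := by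
    rw [openSegment_eq_image']
    refine ⟨s₁ / s₂, ⟨div_pos h1 hs2, (div_lt_one hs2).2 hlt⟩, ?_⟩
    show w + (s₁ / s₂) • (w + s₂ • v - w) = w + s₁ • v
    rw [add_sub_cancel_left, smul_smul, div_mul_cancel₀ _ hs2.ne']
  have hint : w + s₁ • v ∈ interior Ω :=
    hC.openSegment_interior_closure_subset_interior (by rwa [hO.interior_eq])
      (frontier_subset_closure hf2) hmem
  exact hf1.2 hint

private lemma front_uniq {E : Type*} [NormedAddCommGroup E] [NormedSpace ℝ E]
    {Ω : Set E} (hO : IsOpen Ω) (hC : Convex ℝ Ω) {w v : E}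
    (hw : w ∈ Ω) {s₁ s₂ : ℝ} (h1 : 0 < s₁) (h2 : 0 < s₂)
    (hf1 : w + s₁ • v ∈ frontier Ω) (hf2 : w + s₂ • v ∈ frontier Ω) : s₁ = s₂ := by
  rcases lt_trichotomy s₁ s₂ with h | h | h
  · exact absurd (front_lt hO hC hw h1 h hf1 hf2) not_false
  · exact h
  · exact absurd (front_lt hO hC hw h2 h hf2 hf1) not_false

private lemma logadd {a b t : ℝ} (ha : a < 0) (ht0 : 0 < t) (ht1 : t < 1) (hb : 1 < b) :
    Real.log ((b - 0) / (b - 1) * ((1 - a) / (0 - a))) =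
      Real.log ((b - 0) / (b - t) * ((t - a) / (0 - a))) +
        Real.log ((b - t) / (b - 1) * ((1 - a) / (t - a))) := by
  have h1 : (0:ℝ) < (b - 0) / (b - t) * ((t - a) / (0 - a)) :=
    mul_pos (div_pos (by linarith) (by linarith)) (div_pos (by linarith) (by linarith))
  have h2 : (0:ℝ) < (b - t) / (b - 1) * ((1 - a) / (t - a)) :=
    mul_pos (div_pos (by linarith) (by linarith)) (div_pos (by linarith) (by linarith))
  rw [← Real.log_mul h1.ne' h2.ne']
  congr 1
  have hbt : b - t ≠ 0 := by linarith
  have hb1 : b - 1 ≠ 0 := by linarith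
  have h0a : (0:ℝ) - a ≠ 0 := by linarith
  have hta : t - a ≠ 0 := by linarith
  simp only [div_mul_div_comm]
  rw [div_eq_div_iff (by positivity) (mul_ne_zero (mul_ne_zero hbt h0a) (mul_ne_zero hb1 hta))]
  ring

set_option maxHeartbeats 1000000 in
/-- points of the segment `[x,y]` lie on a geodesic: the Hilbert
distance is additive along straight segments. -/
theorem hilbert_dist_additive_on_segments {n : ℕ} (Ω : Set (EuclideanSpace ℝ (Fin n)))
    (hne : Ω.Nonempty) (hO : IsOpen Ω) (hB : Bornology.IsBounded Ω) (hC : Convex ℝ Ω)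
    (d : EuclideanSpace ℝ (Fin n) → EuclideanSpace ℝ (Fin n) → ℝ)
    (hd : IsHilbertDist Ω d)
    (x y z : EuclideanSpace ℝ (Fin n)) (hx : x ∈ Ω) (hy : y ∈ Ω)
    (hz : z ∈ segment ℝ x y) :
    d x y = d x z + d z y := by
  obtain ⟨hd0, hdm⟩ := hd
  rcases eq_or_ne z x with rfl | hzx
  · rw [hd0, zero_add]
  rcases eq_or_ne z y with rfl | hzy
  · rw [hd0, add_zero]
  rcases eq_or_ne x y with rfl | hxy
  · rw [segment_same] at hz
    exact absurd hz hzx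
  have hzΩ : z ∈ Ω := hC.segment_subset hx hy hz
  have hv : y - x ≠ 0 := sub_ne_zero_of_ne (Ne.symm hxy)
  set v := y - x with hvdef
  rw [segment_eq_image'] at hz
  obtain ⟨t, ht, hzt⟩ := hz
  have hzt : x + t • v = z := hzt
  have ht0 : 0 < t := by
    rcases ht.1.lt_or_eq with h | h
    · exact h
    · exact absurd (by rw [← hzt, ← h, zero_smul, add_zero]) hzx
  have ht1 : t < 1 := by
    rcases ht.2.eq_or_lt with h | h
    · exact absurd (by rw [← hzt, h, one_smul, hvdef]; abel) hzy
    · exact h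
  obtain ⟨a₁, ha₁f, b₁, hb₁f, hxa₁, hyb₁, hdxy⟩ := hdm x hx y hy hxy
  obtain ⟨a₂, ha₂f, b₂, hb₂f, hxa₂, hzb₂, hdxz⟩ := hdm x hx z hzΩ (Ne.symm hzx)
  obtain ⟨a₃, ha₃f, b₃, hb₃f, hza₃, hyb₃, hdzy⟩ := hdm z hzΩ y hy hzy
  obtain ⟨α, hα, ha₁⟩ := seg_left hxa₁
  obtain ⟨β, hβ, hb₁⟩ := seg_right hyb₁
  obtain ⟨s₂, hs₂, ha₂⟩ := seg_left hxa₂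
  obtain ⟨u₂, hu₂, hb₂⟩ := seg_right hzb₂
  obtain ⟨s₃, hs₃, ha₃⟩ := seg_left hza₃
  obtain ⟨u₃, hu₃, hb₃⟩ := seg_right hyb₃
  rw [← hvdef] at ha₁ hb₁
  have hzx' : z - x = t • v := by rw [← hzt]; abel
  have hyz' : y - z = (1 - t) • v := by rw [← hzt, hvdef]; module
  have ha₂' : a₂ = x + (s₂ * t) • v := by rw [ha₂, hzx', smul_smul]
  have hb₂' : b₂ = x + (u₂ * t) • v := by rw [hb₂, hzx', smul_smul]
  have ha₃' : a₃ = x + (t + s₃ * (1 - t)) • v := by rw [ha₃, hyz', ← hzt]; module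
  have hb₃' : b₃ = x + (t + u₃ * (1 - t)) • v := by rw [hb₃, hyz', ← hzt]; module
  -- uniqueness of frontier points on the line
  have keyneg : ∀ c : ℝ, x + c • v = z + (t - c) • (-v) := fun c => by rw [← hzt]; module
  have key : ∀ c : ℝ, x + c • v = z + (c - t) • v := fun c => by rw [← hzt]; module
  have hfa₁ : z + (t - α) • (-v) ∈ frontier Ω := by rw [← keyneg, ← ha₁]; exact ha₁f
  have hfa₂ : z + (t - s₂ * t) • (-v) ∈ frontier Ω := by rw [← keyneg, ← ha₂']; exact ha₂f
  have hfa₃ : z + (t - (t + s₃ * (1 - t))) • (-v) ∈ frontier Ω := by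
    rw [← keyneg, ← ha₃']; exact ha₃f
  have hfb₁ : z + (β - t) • v ∈ frontier Ω := by rw [← key, ← hb₁]; exact hb₁f
  have hfb₂ : z + (u₂ * t - t) • v ∈ frontier Ω := by rw [← key, ← hb₂']; exact hb₂f
  have hfb₃ : z + (t + u₃ * (1 - t) - t) • v ∈ frontier Ω := by rw [← key, ← hb₃']; exact hb₃f
  have e₁ : t - α = t - s₂ * t :=
    front_uniq hO hC hzΩ (by linarith) (by nlinarith) hfa₁ hfa₂
  have e₂ : t - α = t - (t + s₃ * (1 - t)) :=
    front_uniq hO hC hzΩ (by linarith) (by nlinarith) hfa₁ hfa₃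
  have f₁ : β - t = u₂ * t - t :=
    front_uniq hO hC hzΩ (by linarith) (by nlinarith) hfb₁ hfb₂
  have f₂ : β - t = t + u₃ * (1 - t) - t :=
    front_uniq hO hC hzΩ (by linarith) (by nlinarith) hfb₁ hfb₃
  have ha₂'' : a₂ = x + α • v := by rw [ha₂']; congr 1; congr 1; linarith
  have ha₃'' : a₃ = x + α • v := by rw [ha₃']; congr 1; congr 1; linarith
  have hb₂'' : b₂ = x + β • v := by rw [hb₂']; congr 1; congr 1; linarith
  have hb₃'' : b₃ = x + β • v := by rw [hb₃']; congr 1; congr 1; linarith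
  -- norms
  have hr : (0:ℝ) < ‖v‖ := norm_pos_iff.2 hv
  have hxX : x = x + (0:ℝ) • v := by rw [zero_smul, add_zero]
  have hyX : y = x + (1:ℝ) • v := by rw [hvdef]; module
  have hzX : z = x + t • v := hzt.symm
  have hnorm : ∀ (p q : EuclideanSpace ℝ (Fin n)) (c₁ c₂ : ℝ), p = x + c₁ • v →
      q = x + c₂ • v → c₂ < c₁ → ‖p - q‖ = (c₁ - c₂) * ‖v‖ := by
    intro p q c₁ c₂ hp hq hlt
    rw [hp, hq, show x + c₁ • v - (x + c₂ • v) = (c₁ - c₂) • v by module, norm_smul,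
      Real.norm_eq_abs, abs_of_pos (by linarith)]
  have hnorm' : ∀ (p q : EuclideanSpace ℝ (Fin n)) (c₁ c₂ : ℝ), p = x + c₁ • v →
      q = x + c₂ • v → c₁ < c₂ → ‖p - q‖ = (c₂ - c₁) * ‖v‖ := by
    intro p q c₁ c₂ hp hq hlt
    rw [norm_sub_rev]; exact hnorm q p c₂ c₁ hq hp hlt
  have q1 : ‖b₁ - x‖ / ‖b₁ - y‖ = (β - 0) / (β - 1) := by
    rw [hnorm b₁ x β 0 hb₁ hxX (by linarith), hnorm b₁ y β 1 hb₁ hyX (by linarith),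
      mul_div_mul_right _ _ hr.ne']
  have q2 : ‖a₁ - y‖ / ‖a₁ - x‖ = (1 - α) / (0 - α) := by
    rw [hnorm' a₁ y α 1 ha₁ hyX (by linarith), hnorm' a₁ x α 0 ha₁ hxX (by linarith),
      mul_div_mul_right _ _ hr.ne']
  have q3 : ‖b₂ - x‖ / ‖b₂ - z‖ = (β - 0) / (β - t) := by
    rw [hnorm b₂ x β 0 hb₂'' hxX (by linarith), hnorm b₂ z β t hb₂'' hzX (by linarith),
      mul_div_mul_right _ _ hr.ne']
  have q4 : ‖a₂ - z‖ / ‖a₂ - x‖ = (t - α) / (0 - α) := by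
    rw [hnorm' a₂ z α t ha₂'' hzX (by linarith), hnorm' a₂ x α 0 ha₂'' hxX (by linarith),
      mul_div_mul_right _ _ hr.ne']
  have q5 : ‖b₃ - z‖ / ‖b₃ - y‖ = (β - t) / (β - 1) := by
    rw [hnorm b₃ z β t hb₃'' hzX (by linarith), hnorm b₃ y β 1 hb₃'' hyX (by linarith),
      mul_div_mul_right _ _ hr.ne']
  have q6 : ‖a₃ - y‖ / ‖a₃ - z‖ = (1 - α) / (t - α) := by
    rw [hnorm' a₃ y α 1 ha₃'' hyX (by linarith), hnorm' a₃ z α t ha₃'' hzX (by linarith),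
      mul_div_mul_right _ _ hr.ne']
  rw [hdxy, hdxz, hdzy, q1, q2, q3, q4, q5, q6]
  exact logadd hα ht0 ht1 hβ
end

section
/- Let Ω be a bounded open convex subset of ℝⁿ with Hilbert distance d. Let p and q be two distinct points of the frontier of Ω such that the open segment (p,q) is contained in Ω, and suppose that at least one of p, q is an extreme point of the closure of Ω. Then for all x, y in the open segment (p,q) and all z ∈ Ω, one has d(x,y) = d(x,z) + d(z,y) if and only if z lies on the closed segment [x,y]. -/
set_option maxHeartbeats 1000000
set_option linter.unusedSectionVars false
set_option linter.unusedVariables false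



set_option linter.unusedSectionVars false

variable {E : Type*} [NormedAddCommGroup E] [NormedSpace ℝ E]

lemma my_frontier_disj {Ω : Set E} (hO : IsOpen Ω) {b : E} (hb : b ∈ frontier Ω) : b ∉ Ω := by
  rw [hO.frontier_eq] at hb; exact hb.2

lemma my_comb_P (p q : E) {A B : ℝ} (u v : ℝ) (hAB : A + B = 1) :
    A • (p + u • (q - p)) + B • (p + v • (q - p)) = p + (A * u + B * v) • (q - p) := by
  have hB : B = 1 - A := by linarith
  subst hB; module

lemma my_memP {Ω : Set E} {p q : E} (hseg : openSegment ℝ p q ⊆ Ω) {u : ℝ}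
    (h0 : 0 < u) (h1 : u < 1) : p + u • (q - p) ∈ Ω :=
  hseg ⟨1 - u, u, by linarith, h0, by ring, by module⟩

lemma my_beyond {Ω : Set E} (hO : IsOpen Ω) (hC : Convex ℝ Ω) {p q : E}
    (hq : q ∈ frontier Ω) (hseg : openSegment ℝ p q ⊆ Ω) {v : ℝ}
    (hv : 1 < v) (hcl : p + v • (q - p) ∈ closure Ω) : False := by
  have hx₀ : p + (1/2 : ℝ) • (q - p) ∈ Ω := my_memP hseg (by norm_num) (by norm_num)
  set θ : ℝ := (1/2) / (v - 1/2) with hθ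
  have hv2 : (0:ℝ) < v - 1/2 := by linarith
  have hθ0 : 0 < θ := by positivity
  have hθ1 : θ < 1 := by rw [hθ, div_lt_one hv2]; linarith
  have hθv : θ * (v - 1/2) = 1/2 := div_mul_cancel₀ _ hv2.ne'
  have hc : (1 - θ) * (1/2) + θ * v = 1 := by nlinarith [hθv]
  have hmem : q ∈ openSegment ℝ (p + (1/2:ℝ) • (q - p)) (p + v • (q - p)) := by
    refine ⟨1 - θ, θ, by linarith, hθ0, by ring, ?_⟩
    rw [my_comb_P p q _ _ (by ring : (1 - θ) + θ = 1), hc]; module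
  have := hC.openSegment_interior_closure_subset_interior
    (by rwa [hO.interior_eq]) hcl hmem
  rw [hO.interior_eq] at this
  exact my_frontier_disj hO hq this

lemma my_before {Ω : Set E} (hO : IsOpen Ω) (hC : Convex ℝ Ω) {p q : E}
    (hp : p ∈ frontier Ω) (hseg : openSegment ℝ p q ⊆ Ω) {v : ℝ}
    (hv : v < 0) (hcl : p + v • (q - p) ∈ closure Ω) : False := by
  have hseg' : openSegment ℝ q p ⊆ Ω := by rwa [openSegment_symm]
  refine my_beyond hO hC hp hseg' (v := 1 - v) (by linarith) ?_
  have : q + (1 - v) • (p - q) = p + v • (q - p) := by module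
  rwa [this]

lemma my_frontier_param {Ω : Set E} (hO : IsOpen Ω) (hC : Convex ℝ Ω) {p q : E}
    (hp : p ∈ frontier Ω) (hq : q ∈ frontier Ω) (hseg : openSegment ℝ p q ⊆ Ω) {v : ℝ}
    (hfr : p + v • (q - p) ∈ frontier Ω) : v = 0 ∨ v = 1 := by
  rcases lt_trichotomy v 0 with h | h | h
  · exact absurd (my_before hO hC hp hseg h (hfr.1)) id
  · exact Or.inl h
  rcases lt_trichotomy v 1 with h1 | h1 | h1
  · exact absurd (my_memP hseg h h1) (my_frontier_disj hO hfr)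
  · exact Or.inr h1
  · exact absurd (my_beyond hO hC hq hseg h1 (hfr.1)) id

lemma my_param_range {Ω : Set E} (hO : IsOpen Ω) (hC : Convex ℝ Ω) {p q : E}
    (hp : p ∈ frontier Ω) (hq : q ∈ frontier Ω) (hseg : openSegment ℝ p q ⊆ Ω) {c : ℝ}
    (hc : p + c • (q - p) ∈ Ω) : 0 < c ∧ c < 1 := by
  rcases lt_trichotomy c 0 with h | h | h
  · exact absurd (my_before hO hC hp hseg h (subset_closure hc)) id
  · exfalso; apply my_frontier_disj hO hp; rw [h] at hc; simpa using hc
  rcases lt_trichotomy c 1 with h1 | h1 | h1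
  · exact ⟨h, h1⟩
  · exfalso; apply my_frontier_disj hO hq; rw [h1] at hc; simpa using hc
  · exact absurd (my_beyond hO hC hq hseg h1 (subset_closure hc)) id



lemma my_openSegment_shift {x y w : E} (h : x ∈ openSegment ℝ w y) :
    ∃ s : ℝ, 0 < s ∧ w = x + s • (x - y) := by
  obtain ⟨A, B, hA, hB, hAB, he⟩ := h
  refine ⟨B / A, div_pos hB hA, ?_⟩
  apply smul_right_injective E hA.ne'
  have h1 : A • w = x - B • y := eq_sub_of_add_eq he
  have hB1 : B = 1 - A := by linarith
  subst hB1
  show A • w = A • (x + ((1 - A) / A) • (x - y))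
  rw [smul_add, smul_smul]
  have h2 : A * ((1 - A) / A) = 1 - A := by field_simp
  rw [h2, h1]; module

lemma my_ratio_norm {x y : E} (hxy : x ≠ y) {s : ℝ} (hs : 0 < s) :
    ‖x + s • (x - y) - y‖ / ‖x + s • (x - y) - x‖ = (1 + s) / s := by
  have h1 : x + s • (x - y) - y = (1 + s) • (x - y) := by module
  have h2 : x + s • (x - y) - x = s • (x - y) := by module
  have hn : ‖x - y‖ ≠ 0 := by simp [sub_eq_zero, hxy]
  rw [h1, h2, norm_smul, norm_smul, Real.norm_eq_abs, Real.norm_eq_abs,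
    abs_of_pos hs, abs_of_pos (by linarith : (0:ℝ) < 1 + s), mul_div_mul_right _ _ hn]

lemma my_d_formula {n : ℕ} {Ω : Set (EuclideanSpace ℝ (Fin n))}
    {d : EuclideanSpace ℝ (Fin n) → EuclideanSpace ℝ (Fin n) → ℝ} (hd : IsHilbertDist Ω d)
    {x z : EuclideanSpace ℝ (Fin n)} (hx : x ∈ Ω) (hz : z ∈ Ω) (hxz : x ≠ z) :
    ∃ s t : ℝ, 0 < s ∧ 0 < t ∧ x + s • (x - z) ∈ frontier Ω ∧ z + t • (z - x) ∈ frontier Ω ∧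
      d x z = Real.log (((1 + t) / t) * ((1 + s) / s)) := by
  obtain ⟨xb, hxb, yb, hyb, hm1, hm2, heq⟩ := hd.2 x hx z hz hxz
  obtain ⟨s, hs, hxbe⟩ := my_openSegment_shift hm1
  rw [openSegment_symm] at hm2
  obtain ⟨t, ht, hybe⟩ := my_openSegment_shift hm2
  refine ⟨s, t, hs, ht, hxbe ▸ hxb, hybe ▸ hyb, ?_⟩
  rw [heq, hxbe, hybe, my_ratio_norm (Ne.symm hxz) ht, my_ratio_norm hxz hs]

lemma my_d_pos {n : ℕ} {Ω : Set (EuclideanSpace ℝ (Fin n))}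
    {d : EuclideanSpace ℝ (Fin n) → EuclideanSpace ℝ (Fin n) → ℝ} (hd : IsHilbertDist Ω d)
    {x z : EuclideanSpace ℝ (Fin n)} (hx : x ∈ Ω) (hz : z ∈ Ω) (hxz : x ≠ z) :
    0 < d x z := by
  obtain ⟨s, t, hs, ht, _, _, hdf⟩ := my_d_formula hd hx hz hxz
  rw [hdf]
  have h1 : 1 < (1 + t) / t := (one_lt_div ht).2 (by linarith)
  have h2 : 1 < (1 + s) / s := (one_lt_div hs).2 (by linarith)
  exact Real.log_pos (one_lt_mul h1.le h2)

noncomputable def Glog (t : ℝ) : ℝ := Real.log t - Real.log (1 - t)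

lemma Glog_lt {u v : ℝ} (h0 : 0 < u) (hv : v < 1) (huv : u < v) : Glog u < Glog v := by
  unfold Glog
  have l1 : Real.log u < Real.log v := Real.log_lt_log h0 huv
  have l2 : Real.log (1 - v) < Real.log (1 - u) :=
    Real.log_lt_log (by linarith) (by linarith)
  linarith

lemma Glog_le {u v : ℝ} (h0 : 0 < u) (hv : v < 1) (huv : u ≤ v) : Glog u ≤ Glog v := by
  rcases eq_or_lt_of_le huv with h | h
  · rw [h]
  · exact (Glog_lt h0 hv h).le

lemma my_d_chord_lt {n : ℕ} {Ω : Set (EuclideanSpace ℝ (Fin n))}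
    {d : EuclideanSpace ℝ (Fin n) → EuclideanSpace ℝ (Fin n) → ℝ} (hd : IsHilbertDist Ω d)
    (hO : IsOpen Ω) (hC : Convex ℝ Ω) {p q : EuclideanSpace ℝ (Fin n)}
    (hp : p ∈ frontier Ω) (hq : q ∈ frontier Ω) (hpq : p ≠ q)
    (hseg : openSegment ℝ p q ⊆ Ω) {u v : ℝ}
    (h0u : 0 < u) (hv1 : v < 1) (huv : u < v) :
    d (p + u • (q - p)) (p + v • (q - p)) = Glog v - Glog u := by
  have h0v : (0:ℝ) < v := lt_trans h0u huv
  have hu1 : u < 1 := lt_trans huv hv1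
  have hx : p + u • (q - p) ∈ Ω := my_memP hseg h0u hu1
  have hz : p + v • (q - p) ∈ Ω := my_memP hseg h0v hv1
  have hqp : q - p ≠ 0 := sub_ne_zero.2 (Ne.symm hpq)
  have hxz : p + u • (q - p) ≠ p + v • (q - p) := by
    intro h
    exact absurd (smul_left_injective ℝ hqp (add_left_cancel h)) (ne_of_lt huv)
  obtain ⟨s, t, hs, ht, hsf, htf, hdf⟩ := my_d_formula hd hx hz hxz
  have hsP : p + u • (q - p) + s • (p + u • (q - p) - (p + v • (q - p)))
      = p + (u + s * (u - v)) • (q - p) := by module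
  have htP : p + v • (q - p) + t • (p + v • (q - p) - (p + u • (q - p)))
      = p + (v + t * (v - u)) • (q - p) := by module
  rw [hsP] at hsf
  rw [htP] at htf
  have hs0 : u + s * (u - v) = 0 := by
    rcases my_frontier_param hO hC hp hq hseg hsf with h | h
    · exact h
    · nlinarith
  have ht1 : v + t * (v - u) = 1 := by
    rcases my_frontier_param hO hC hp hq hseg htf with h | h
    · nlinarith
    · exact h
  have hvu : (0:ℝ) < v - u := by linarith
  have hsv : s = u / (v - u) := by
    rw [eq_div_iff hvu.ne']; nlinarith
  have htv : t = (1 - v) / (v - u) := by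
    rw [eq_div_iff hvu.ne']; nlinarith
  have h1v : (1:ℝ) - v ≠ 0 := by linarith
  have h1u : (1:ℝ) - u ≠ 0 := by linarith
  have h1 : (1 + t) / t = (1 - u) / (1 - v) := by
    rw [htv, div_eq_div_iff (by positivity) h1v]
    field_simp; ring
  have h2 : (1 + s) / s = v / u := by
    rw [hsv, div_eq_div_iff (by positivity) h0u.ne']
    field_simp; ring
  rw [hdf, h1, h2, Real.log_mul (by positivity) (by positivity),
    Real.log_div h1u h1v, Real.log_div h0v.ne' h0u.ne']
  unfold Glog
  ring

lemma my_d_chord {n : ℕ} {Ω : Set (EuclideanSpace ℝ (Fin n))}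
    {d : EuclideanSpace ℝ (Fin n) → EuclideanSpace ℝ (Fin n) → ℝ} (hd : IsHilbertDist Ω d)
    (hO : IsOpen Ω) (hC : Convex ℝ Ω) {p q : EuclideanSpace ℝ (Fin n)}
    (hp : p ∈ frontier Ω) (hq : q ∈ frontier Ω) (hpq : p ≠ q)
    (hseg : openSegment ℝ p q ⊆ Ω) {u v : ℝ}
    (h0u : 0 < u) (hu1 : u < 1) (h0v : 0 < v) (hv1 : v < 1) :
    d (p + u • (q - p)) (p + v • (q - p)) = |Glog v - Glog u| := by
  rcases lt_trichotomy u v with h | h | h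
  · rw [my_d_chord_lt hd hO hC hp hq hpq hseg h0u hv1 h,
      abs_of_pos (sub_pos.2 (Glog_lt h0u hv1 h))]
  · rw [h, hd.1, sub_self, abs_zero]
  · have hswap := my_d_chord_lt hd hO hC hq hp hpq.symm
      (by rwa [openSegment_symm]) (u := 1 - u) (v := 1 - v)
      (by linarith) (by linarith) (by linarith)
    have e1 : q + (1-u) • (p - q) = p + u • (q - p) := by module
    have e2 : q + (1-v) • (p - q) = p + v • (q - p) := by module
    rw [e1, e2] at hswap
    rw [hswap, abs_of_neg (sub_neg.2 (Glog_lt h0v hu1 h))]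
    unfold Glog
    have r1 : (1:ℝ) - (1 - v) = v := by ring
    have r2 : (1:ℝ) - (1 - u) = u := by ring
    rw [r1, r2]; ring

lemma my_abs_add_iff {A B C : ℝ} : |B - A| = |C - A| + |B - C| ↔ C ∈ Set.uIcc A B := by
  rw [Set.mem_uIcc]
  constructor
  · intro h
    rcases le_total A C with h1 | h1 <;> rcases le_total C B with h2 | h2
    · exact Or.inl ⟨h1, h2⟩
    · rcases le_total A B with h3 | h3
      · left
        refine ⟨h1, ?_⟩
        rw [abs_of_nonneg (by linarith), abs_of_nonneg (by linarith),
          abs_of_nonpos (by linarith)] at h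
        linarith
      · right
        refine ⟨h2, ?_⟩
        rw [abs_of_nonpos (by linarith), abs_of_nonneg (by linarith),
          abs_of_nonpos (by linarith)] at h
        linarith
    · rcases le_total A B with h3 | h3
      · left
        refine ⟨?_, h2⟩
        rw [abs_of_nonneg (by linarith), abs_of_nonpos (by linarith),
          abs_of_nonneg (by linarith)] at h
        linarith
      · right
        refine ⟨?_, h1⟩
        rw [abs_of_nonpos (by linarith), abs_of_nonpos (by linarith),
          abs_of_nonneg (by linarith)] at h
        linarith
    · exact Or.inr ⟨h2, h1⟩
  · rintro (⟨h1, h2⟩ | ⟨h1, h2⟩)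
    · rw [abs_of_nonneg (by linarith), abs_of_nonneg (by linarith),
        abs_of_nonneg (by linarith)]
      ring
    · rw [abs_of_nonpos (by linarith), abs_of_nonpos (by linarith),
        abs_of_nonpos (by linarith)]
      ring

lemma my_mul_cancel_eq {a A m M : ℝ} (ha : 0 < a) (haA : a ≤ A) (hm : 0 < m) (hmM : m ≤ M)
    (h : a * m = A * M) : a = A ∧ m = M := by
  have h1 : a * m ≤ A * m := mul_le_mul_of_nonneg_right haA hm.le
  have h2 : A * m ≤ A * M := mul_le_mul_of_nonneg_left hmM (by linarith)
  have e1 : a * m = A * m := le_antisymm h1 (by linarith)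
  have e2 : A * m = A * M := le_antisymm h2 (by linarith)
  exact ⟨mul_right_cancel₀ hm.ne' e1, mul_left_cancel₀ (by linarith : A ≠ 0) e2⟩

lemma my_key_contra {E : Type*} [NormedAddCommGroup E] [NormedSpace ℝ E]
    {Ω : Set E} {x y z e b₁ b₂ : E} (f : E →L[ℝ] ℝ)
    {t₀ t₁ t₂ : ℝ} (ht₀ : 0 < t₀) (ht₁ : 0 < t₁) (ht₂ : 0 < t₂)
    (he : e = y + t₀ • (y - x)) (hb₁ : b₁ = z + t₁ • (z - x)) (hb₂ : b₂ = y + t₂ • (y - z))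
    (hf1 : f b₁ = f e) (hf2 : f b₂ = f e) (hfxy : f x ≠ f y)
    (hb₁c : b₁ ∈ closure Ω) (hb₂c : b₂ ∈ closure Ω)
    (hext : e ∈ Set.extremePoints ℝ (closure Ω)) :
    ∃ c : ℝ, z = x + c • (y - x) := by
  have hD : (0:ℝ) < 1 + t₁ + t₂ := by linarith
  set μ : ℝ := (1 + t₁) * (1 + t₂) / (1 + t₁ + t₂) with hμ
  have hw : ((t₂/(1+t₁+t₂)) • b₁ + ((1+t₁)/(1+t₁+t₂)) • b₂ : E) = x + μ • (y - x) := by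
    rw [hb₁, hb₂, hμ]
    match_scalars <;> field_simp <;> ring
  have hfw : f (x + μ • (y - x)) = f e := by
    rw [← hw, map_add, map_smul, map_smul, hf1, hf2, smul_eq_mul, smul_eq_mul]
    field_simp
    ring
  have hfe : f e = f x + (1 + t₀) * (f y - f x) := by
    rw [he, map_add, map_smul, map_sub, smul_eq_mul]; ring
  have hfx : f (x + μ • (y - x)) = f x + μ * (f y - f x) := by
    rw [map_add, map_smul, map_sub, smul_eq_mul]
  have hμt : μ = 1 + t₀ := by
    rw [hfx, hfe] at hfw
    have hz : (μ - (1 + t₀)) * (f y - f x) = 0 := by linarith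
    rcases mul_eq_zero.1 hz with h' | h'
    · linarith
    · exact absurd (by linarith : f x = f y) hfxy
  have hwe : ((t₂/(1+t₁+t₂)) • b₁ + ((1+t₁)/(1+t₁+t₂)) • b₂ : E) = e := by
    rw [hw, hμt, he]; module
  have hmem : e ∈ openSegment ℝ b₁ b₂ :=
    ⟨t₂/(1+t₁+t₂), (1+t₁)/(1+t₁+t₂), by positivity, by positivity, by field_simp; ring, hwe⟩
  obtain hb1e := hext.2 hb₁c hb₂c hmem
  refine ⟨(1+t₀)/(1+t₁), ?_⟩
  have h1t₁ : (1:ℝ) + t₁ ≠ 0 := by linarith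
  apply smul_right_injective E h1t₁
  show (1+t₁) • z = (1+t₁) • (x + ((1+t₀)/(1+t₁)) • (y - x))
  have hkey : z + t₁ • (z - x) = y + t₀ • (y - x) := by rw [← hb₁, ← he, hb1e]
  rw [smul_add, smul_smul]
  have h2 : (1+t₁) * ((1+t₀)/(1+t₁)) = 1 + t₀ := by field_simp
  rw [h2]
  linear_combination (norm := module) hkey

/-- if `p, q` are frontier points with `(p,q) ⊆ Ω` and at least one of
them is an extreme point of the closure of `Ω`, then `(p,q)` is the unique geodesic
between any two of its points. -/
theorem hilbert_unique_geodesic_of_extreme_endpoint {n : ℕ}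
    (Ω : Set (EuclideanSpace ℝ (Fin n)))
    (hne : Ω.Nonempty) (hO : IsOpen Ω) (hB : Bornology.IsBounded Ω) (hC : Convex ℝ Ω)
    (d : EuclideanSpace ℝ (Fin n) → EuclideanSpace ℝ (Fin n) → ℝ)
    (hd : IsHilbertDist Ω d)
    (p q : EuclideanSpace ℝ (Fin n)) (hp : p ∈ frontier Ω) (hq : q ∈ frontier Ω)
    (hpq : p ≠ q) (hseg : openSegment ℝ p q ⊆ Ω)
    (hext : p ∈ Set.extremePoints ℝ (closure Ω) ∨ q ∈ Set.extremePoints ℝ (closure Ω)) :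
    ∀ x ∈ openSegment ℝ p q, ∀ y ∈ openSegment ℝ p q, ∀ z ∈ Ω,
      (d x y = d x z + d z y ↔ z ∈ segment ℝ x y) := by
  have hqp : q - p ≠ 0 := sub_ne_zero.2 hpq.symm
  intro x hx y hy z hz
  obtain ⟨a, ha0, ha1, hxP⟩ : ∃ a : ℝ, 0 < a ∧ a < 1 ∧ x = p + a • (q - p) := by
    obtain ⟨A, B, hA, hB, hAB, hc⟩ := hx
    refine ⟨B, hB, by linarith, ?_⟩
    rw [← hc]
    have hA1 : A = 1 - B := by linarith
    subst hA1; module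
  obtain ⟨b, hb0, hb1, hyP⟩ : ∃ b : ℝ, 0 < b ∧ b < 1 ∧ y = p + b • (q - p) := by
    obtain ⟨A, B, hA, hB, hAB, hc⟩ := hy
    refine ⟨B, hB, by linarith, ?_⟩
    rw [← hc]
    have hA1 : A = 1 - B := by linarith
    subst hA1; module
  have hxΩ : x ∈ Ω := hseg hx
  have hyΩ : y ∈ Ω := hseg hy
  by_cases hzl : ∃ c : ℝ, z = p + c • (q - p)
  · -- z on the chord
    obtain ⟨c, hzP⟩ := hzl
    obtain ⟨hc0, hc1⟩ := my_param_range hO hC hp hq hseg (hzP ▸ hz)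
    subst hxP; subst hyP; subst hzP
    rw [my_d_chord hd hO hC hp hq hpq hseg ha0 ha1 hb0 hb1,
        my_d_chord hd hO hC hp hq hpq hseg ha0 ha1 hc0 hc1,
        my_d_chord hd hO hC hp hq hpq hseg hc0 hc1 hb0 hb1,
        my_abs_add_iff]
    constructor
    · intro h
      have hcab : c ∈ Set.uIcc a b := by
        rw [Set.mem_uIcc] at h ⊢
        rcases h with ⟨h1, h2⟩ | ⟨h1, h2⟩
        · left
          constructor <;> by_contra hcon <;> push_neg at hcon
          · exact absurd h1 (not_le.2 (Glog_lt hc0 ha1 hcon))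
          · exact absurd h2 (not_le.2 (Glog_lt hb0 hc1 hcon))
        · right
          constructor <;> by_contra hcon <;> push_neg at hcon
          · exact absurd h1 (not_le.2 (Glog_lt hc0 hb1 hcon))
          · exact absurd h2 (not_le.2 (Glog_lt ha0 hc1 hcon))
      rw [← segment_eq_uIcc] at hcab
      obtain ⟨A, B, hA, hB, hAB, hcomb⟩ := hcab
      refine ⟨A, B, hA, hB, hAB, ?_⟩
      rw [my_comb_P p q a b hAB]
      have hcv : A * a + B * b = c := by simpa [smul_eq_mul] using hcomb
      rw [hcv]
    · intro hzs
      obtain ⟨A, B, hA, hB, hAB, hcomb⟩ := hzs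
      rw [my_comb_P p q a b hAB] at hcomb
      have hcval : A * a + B * b = c := smul_left_injective ℝ hqp (add_left_cancel hcomb)
      have hcab : c ∈ Set.uIcc a b := by
        rw [← segment_eq_uIcc]
        exact ⟨A, B, hA, hB, hAB, by rw [smul_eq_mul, smul_eq_mul]; exact hcval⟩
      rw [Set.mem_uIcc] at hcab ⊢
      rcases hcab with ⟨h1, h2⟩ | ⟨h1, h2⟩
      · exact Or.inl ⟨Glog_le ha0 hc1 h1, Glog_le hc0 hb1 h2⟩
      · exact Or.inr ⟨Glog_le hb0 hc1 h1, Glog_le hc0 ha1 h2⟩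
  · -- z off the chord
    push_neg at hzl
    constructor
    · intro heq
      exfalso
      by_cases hxy : x = y
      · have hzx : z ≠ x := fun h => hzl a (by rw [h]; exact hxP)
        have hzy : z ≠ y := by rw [← hxy]; exact hzx
        have h1 := my_d_pos hd hxΩ hz (Ne.symm hzx)
        have h2 := my_d_pos hd hz hyΩ hzy
        rw [← hxy, hd.1] at heq
        rw [← hxy] at h2
        linarith
      · have hxz : x ≠ z := fun h => hzl a (by rw [← h]; exact hxP)
        have hzy : z ≠ y := fun h => hzl b (by rw [h]; exact hyP)
        have hab : a ≠ b := fun h => hxy (by rw [hxP, hyP, h])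
        obtain ⟨s₄, t₁, hs₄, ht₁, hb₄f, hb₁f, hdxz⟩ := my_d_formula hd hxΩ hz hxz
        obtain ⟨s₃, t₂, hs₃, ht₂, hb₃f, hb₂f, hdzy⟩ := my_d_formula hd hz hyΩ hzy
        obtain ⟨s₀, t₀, hs₀, ht₀, hpf', hqf', hdxy⟩ := my_d_formula hd hxΩ hyΩ hxy
        -- identify the chord endpoints
        have hp'P : x + s₀ • (x - y) = p + (a + s₀ * (a - b)) • (q - p) := by
          rw [hxP, hyP]; module
        have hq'P : y + t₀ • (y - x) = p + (b + t₀ * (b - a)) • (q - p) := by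
          rw [hxP, hyP]; module
        have hp'01 := my_frontier_param hO hC hp hq hseg (hp'P ▸ hpf')
        have hq'01 := my_frontier_param hO hC hp hq hseg (hq'P ▸ hqf')
        have hext' : (x + s₀ • (x - y)) ∈ Set.extremePoints ℝ (closure Ω) ∨
            (y + t₀ • (y - x)) ∈ Set.extremePoints ℝ (closure Ω) := by
          have hPQ : (x + s₀ • (x - y) = p ∧ y + t₀ • (y - x) = q) ∨
              (x + s₀ • (x - y) = q ∧ y + t₀ • (y - x) = p) := by
            rcases lt_or_gt_of_ne hab with h | h
            · left
              constructor
              · rcases hp'01 with h0 | h0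
                · rw [hp'P, h0]; simp
                · exfalso
                  have := mul_neg_of_pos_of_neg hs₀ (sub_neg.2 h)
                  linarith
              · rcases hq'01 with h0 | h0
                · exfalso
                  have := mul_pos ht₀ (sub_pos.2 h)
                  linarith
                · rw [hq'P, h0]; module
            · right
              constructor
              · rcases hp'01 with h0 | h0
                · exfalso
                  have := mul_pos hs₀ (sub_pos.2 h)
                  linarith
                · rw [hp'P, h0]; module
              · rcases hq'01 with h0 | h0
                · rw [hq'P, h0]; simp
                · exfalso
                  have := mul_neg_of_pos_of_neg ht₀ (sub_neg.2 h)
                  linarith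
          rcases hPQ with ⟨h1, h2⟩ | ⟨h1, h2⟩ <;> rcases hext with he | he
          · exact Or.inl (by rw [h1]; exact he)
          · exact Or.inr (by rw [h2]; exact he)
          · exact Or.inr (by rw [h2]; exact he)
          · exact Or.inl (by rw [h1]; exact he)
        -- separating functionals
        obtain ⟨f, hf⟩ := geometric_hahn_banach_open_point hC hO (my_frontier_disj hO hqf')
        obtain ⟨g, hg⟩ := geometric_hahn_banach_open_point hC hO (my_frontier_disj hO hpf')
        have hfcl : ∀ w ∈ closure Ω, f w ≤ f (y + t₀ • (y - x)) := fun w hw =>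
          closure_minimal (fun u hu => (hf u hu).le)
            (isClosed_le f.continuous continuous_const) hw
        have hgcl : ∀ w ∈ closure Ω, g w ≤ g (x + s₀ • (x - y)) := fun w hw =>
          closure_minimal (fun u hu => (hg u hu).le)
            (isClosed_le g.continuous continuous_const) hw
        have hfb₁ : f (z + t₁ • (z - x)) = f z + t₁ * (f z - f x) := by
          rw [map_add, map_smul, map_sub, smul_eq_mul]
        have hfb₂ : f (y + t₂ • (y - z)) = f y + t₂ * (f y - f z) := by
          rw [map_add, map_smul, map_sub, smul_eq_mul]
        have hfq' : f (y + t₀ • (y - x)) = f y + t₀ * (f y - f x) := by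
          rw [map_add, map_smul, map_sub, smul_eq_mul]
        have hgb₄ : g (x + s₄ • (x - z)) = g x + s₄ * (g x - g z) := by
          rw [map_add, map_smul, map_sub, smul_eq_mul]
        have hgb₃ : g (z + s₃ • (z - y)) = g z + s₃ * (g z - g y) := by
          rw [map_add, map_smul, map_sub, smul_eq_mul]
        have hgp' : g (x + s₀ • (x - y)) = g x + s₀ * (g x - g y) := by
          rw [map_add, map_smul, map_sub, smul_eq_mul]
        set X := f x with hXd
        set Y := f y with hYd
        set Z := f z with hZd
        set Q := f (y + t₀ • (y - x)) with hQd
        set GX := g x with hGXd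
        set GY := g y with hGYd
        set GZ := g z with hGZd
        set Pg := g (x + s₀ • (x - y)) with hPgd
        have hQX : 0 < Q - X := sub_pos.2 (hf x hxΩ)
        have h1 : Z + t₁ * (Z - X) ≤ Q := by rw [← hfb₁, hQd]; exact hfcl _ hb₁f.1
        have h2 : Y + t₂ * (Y - Z) ≤ Q := by rw [← hfb₂, hQd]; exact hfcl _ hb₂f.1
        have h3 : GX + s₄ * (GX - GZ) ≤ Pg := by rw [← hgb₄, hPgd]; exact hgcl _ hb₄f.1
        have h4 : GZ + s₃ * (GZ - GY) ≤ Pg := by rw [← hgb₃, hPgd]; exact hgcl _ hb₃f.1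
        have hQY : 0 < Q - Y := sub_pos.2 (hf y hyΩ)
        have hQZ : 0 < Q - Z := sub_pos.2 (hf z hz)
        have hPX : 0 < Pg - GX := sub_pos.2 (hg x hxΩ)
        have hPY : 0 < Pg - GY := sub_pos.2 (hg y hyΩ)
        have hPZ : 0 < Pg - GZ := sub_pos.2 (hg z hz)
        have ha₁ : (Q - X) / (Q - Z) ≤ (1 + t₁) / t₁ := by
          rw [div_le_div_iff₀ hQZ ht₁]; nlinarith [h1]
        have ha₂ : (Q - Z) / (Q - Y) ≤ (1 + t₂) / t₂ := by
          rw [div_le_div_iff₀ hQY ht₂]; nlinarith [h2]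
        have hc₄ : (Pg - GZ) / (Pg - GX) ≤ (1 + s₄) / s₄ := by
          rw [div_le_div_iff₀ hPX hs₄]; nlinarith [h3]
        have hc₃ : (Pg - GY) / (Pg - GZ) ≤ (1 + s₃) / s₃ := by
          rw [div_le_div_iff₀ hPZ hs₃]; nlinarith [h4]
        have ht₀e : (1 + t₀) / t₀ = (Q - X) / (Q - Y) := by
          rw [div_eq_div_iff ht₀.ne' hQY.ne']; linear_combination hfq'
        have hs₀e : (1 + s₀) / s₀ = (Pg - GY) / (Pg - GX) := by
          rw [div_eq_div_iff hs₀.ne' hPX.ne']; linear_combination hgp'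
        rw [hdxy, hdxz, hdzy] at heq
        have hR1 : (0:ℝ) < (1 + t₁) / t₁ * ((1 + s₄) / s₄) :=
          mul_pos (div_pos (by linarith) ht₁) (div_pos (by linarith) hs₄)
        have hR2 : (0:ℝ) < (1 + t₂) / t₂ * ((1 + s₃) / s₃) :=
          mul_pos (div_pos (by linarith) ht₂) (div_pos (by linarith) hs₃)
        have hR0 : (0:ℝ) < (1 + t₀) / t₀ * ((1 + s₀) / s₀) :=
          mul_pos (div_pos (by linarith) ht₀) (div_pos (by linarith) hs₀)
        have hprod : (1 + t₀) / t₀ * ((1 + s₀) / s₀)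
            = ((1 + t₁) / t₁ * ((1 + s₄) / s₄)) * ((1 + t₂) / t₂ * ((1 + s₃) / s₃)) := by
          apply Real.log_injOn_pos (Set.mem_Ioi.2 hR0) (Set.mem_Ioi.2 (mul_pos hR1 hR2))
          rw [Real.log_mul hR1.ne' hR2.ne']
          exact heq
        have hchainf : (Q - X) / (Q - Y) = ((Q - X) / (Q - Z)) * ((Q - Z) / (Q - Y)) := by
          rw [div_mul_div_comm, mul_comm (Q - X) _, mul_div_mul_left _ _ hQZ.ne']
        have hchaing : (Pg - GY) / (Pg - GX)
            = ((Pg - GY) / (Pg - GZ)) * ((Pg - GZ) / (Pg - GX)) := by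
          rw [div_mul_div_comm, mul_comm (Pg - GY) _, mul_div_mul_left _ _ hPZ.ne']
        have ha₁p : 0 < (Q - X) / (Q - Z) := div_pos hQX hQZ
        have ha₂p : 0 < (Q - Z) / (Q - Y) := div_pos hQZ hQY
        have hc₄p : 0 < (Pg - GZ) / (Pg - GX) := div_pos hPZ hPX
        have hc₃p : 0 < (Pg - GY) / (Pg - GZ) := div_pos hPY hPZ
        have hA₂p : (0:ℝ) < (1 + t₂) / t₂ := div_pos (by linarith) ht₂
        have hB₃p : (0:ℝ) < (1 + s₃) / s₃ := div_pos (by linarith) hs₃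
        have hmle2 : ((Pg - GY) / (Pg - GZ)) * ((Pg - GZ) / (Pg - GX))
            ≤ ((1 + s₃) / s₃) * ((1 + s₄) / s₄) :=
          mul_le_mul hc₃ hc₄ hc₄p.le hB₃p.le
        have hmle : ((Q - Z) / (Q - Y))
              * (((Pg - GY) / (Pg - GZ)) * ((Pg - GZ) / (Pg - GX)))
            ≤ ((1 + t₂) / t₂) * (((1 + s₃) / s₃) * ((1 + s₄) / s₄)) :=
          mul_le_mul ha₂ hmle2 (mul_pos hc₃p hc₄p).le hA₂p.le
        have hbig : ((Q - X) / (Q - Z))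
              * (((Q - Z) / (Q - Y)) * (((Pg - GY) / (Pg - GZ)) * ((Pg - GZ) / (Pg - GX))))
            = ((1 + t₁) / t₁) * (((1 + t₂) / t₂) * (((1 + s₃) / s₃) * ((1 + s₄) / s₄))) := by
          have e1 : ((Q - X) / (Q - Z))
              * (((Q - Z) / (Q - Y)) * (((Pg - GY) / (Pg - GZ)) * ((Pg - GZ) / (Pg - GX))))
              = (((Q - X) / (Q - Z)) * ((Q - Z) / (Q - Y)))
              * (((Pg - GY) / (Pg - GZ)) * ((Pg - GZ) / (Pg - GX))) := by ring
          rw [e1, ← hchainf, ← hchaing, ← ht₀e, ← hs₀e]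
          linear_combination hprod
        obtain ⟨E₁, hrest1⟩ := my_mul_cancel_eq ha₁p ha₁
          (mul_pos ha₂p (mul_pos hc₃p hc₄p)) hmle hbig
        obtain ⟨E₂, hrest2⟩ := my_mul_cancel_eq ha₂p ha₂ (mul_pos hc₃p hc₄p) hmle2 hrest1
        obtain ⟨E₃, E₄⟩ := my_mul_cancel_eq hc₃p hc₃ hc₄p hc₄ hrest2
        rw [div_eq_div_iff hQZ.ne' ht₁.ne'] at E₁
        rw [div_eq_div_iff hQY.ne' ht₂.ne'] at E₂
        rw [div_eq_div_iff hPZ.ne' hs₃.ne'] at E₃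
        rw [div_eq_div_iff hPX.ne' hs₄.ne'] at E₄
        have hfb₁Q : f (z + t₁ • (z - x)) = Q := by
          rw [hfb₁]; linear_combination E₁
        have hfb₂Q : f (y + t₂ • (y - z)) = Q := by
          rw [hfb₂]; linear_combination E₂
        have hgb₃P : g (z + s₃ • (z - y)) = Pg := by
          rw [hgb₃]; linear_combination E₃
        have hgb₄P : g (x + s₄ • (x - z)) = Pg := by
          rw [hgb₄]; linear_combination E₄
        have hXY : X < Y := by
          by_contra hcon
          push_neg at hcon
          have hnp : t₀ * (Y - X) ≤ 0 :=
            mul_nonpos_of_nonneg_of_nonpos ht₀.le (by linarith)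
          linarith [hfq', hQY]
        have hGYX : GY < GX := by
          by_contra hcon
          push_neg at hcon
          have hnp : s₀ * (GX - GY) ≤ 0 :=
            mul_nonpos_of_nonneg_of_nonpos hs₀.le (by linarith)
          linarith [hgp', hPX]
        rw [hQd] at hfb₁Q hfb₂Q
        rw [hPgd] at hgb₃P hgb₄P
        have hfxY : f x ≠ f y := by rw [← hXd, ← hYd]; exact ne_of_lt hXY
        have hgYX : g y ≠ g x := by rw [← hGYd, ← hGXd]; exact ne_of_lt hGYX
        rcases hext' with hpe | hqe
        · obtain ⟨c, hcz⟩ := my_key_contra (Ω := Ω) g hs₀ hs₃ hs₄ rfl rfl rfl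
            hgb₃P hgb₄P hgYX hb₃f.1 hb₄f.1 hpe
          exact hzl (b + c * (a - b)) (by rw [hcz, hxP, hyP]; module)
        · obtain ⟨c, hcz⟩ := my_key_contra (Ω := Ω) f ht₀ ht₁ ht₂ rfl rfl rfl
            hfb₁Q hfb₂Q hfxY hb₁f.1 hb₂f.1 hqe
          exact hzl (a + c * (b - a)) (by rw [hcz, hxP, hyP]; module)
    · intro hzs
      obtain ⟨A, B, hA, hB, hAB, hcomb⟩ := hzs
      exact (hzl (A * a + B * b)
        (by rw [← hcomb, hxP, hyP, my_comb_P p q a b hAB])).elim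
end

section
/- Let Ω be a bounded open strictly convex subset of ℝⁿ with Hilbert distance d (strictly convex meaning the frontier of Ω contains no nondegenerate straight segment, equivalently every point of the frontier is an extreme point of the closure of Ω). Then for all x, y, z ∈ Ω, one has d(x,y) = d(x,z) + d(z,y) if and only if z lies on the closed segment [x,y]; that is, the affine segment is the unique geodesic between any two points of Ω. -/
section HilbertHelpers

variable {n : ℕ}

lemma mem_openSegment_param (x v : EuclideanSpace ℝ (Fin n)) {p q r : ℝ}
    (hpq : p < q) (hqr : q < r) :
    x + q • v ∈ openSegment ℝ (x + p • v) (x + r • v) := by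
  rw [openSegment_eq_image']
  have hrp : r - p ≠ 0 := by intro h; linarith [hpq, hqr]
  refine ⟨(q - p) / (r - p), ⟨by apply div_pos <;> linarith, by rw [div_lt_one (by linarith)]; linarith⟩, ?_⟩
  have : (x + r • v) - (x + p • v) = (r - p) • v := by module
  rw [this]
  match_scalars <;> field_simp <;> ring

lemma openSegment_param_left {x y w : EuclideanSpace ℝ (Fin n)}
    (h : x ∈ openSegment ℝ w y) : ∃ A : ℝ, A < 0 ∧ w = x + A • (y - x) := by
  rw [openSegment_eq_image] at h
  obtain ⟨t, ⟨ht0, ht1⟩, hw⟩ := h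
  refine ⟨-t / (1 - t), by have : (0:ℝ) < 1 - t := by linarith
                           exact div_neg_of_neg_of_pos (by linarith) this, ?_⟩
  have h1t : (1 : ℝ) - t ≠ 0 := by linarith
  rw [← hw]
  match_scalars <;> field_simp <;> ring

lemma openSegment_param_right {x y w : EuclideanSpace ℝ (Fin n)}
    (h : y ∈ openSegment ℝ x w) : ∃ B : ℝ, 1 < B ∧ w = x + B • (y - x) := by
  rw [openSegment_eq_image] at h
  obtain ⟨t, ⟨ht0, ht1⟩, hw⟩ := h
  refine ⟨1 / t, (one_lt_div ht0).2 ht1, ?_⟩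
  have ht : t ≠ 0 := ne_of_gt ht0
  rw [← hw]
  match_scalars <;> field_simp <;> ring

lemma frontier_unique {Ω : Set (EuclideanSpace ℝ (Fin n))} (hO : IsOpen Ω) (hC : Convex ℝ Ω)
    {x v : EuclideanSpace ℝ (Fin n)} (hx : x ∈ Ω) {s t : ℝ} (hs : 0 < s) (ht : 0 < t)
    (hfs : x + s • v ∈ frontier Ω) (hft : x + t • v ∈ frontier Ω) : s = t := by
  have key : ∀ s t : ℝ, 0 < s → s < t → x + s • v ∈ frontier Ω → x + t • v ∈ frontier Ω → False := by
    intro s t hs hst hfs hft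
    have h1 : x + s • v ∈ openSegment ℝ x (x + t • v) := by
      simpa using mem_openSegment_param x v hs hst
    have h2 : x + s • v ∈ interior Ω := by
      refine hC.openSegment_interior_closure_subset_interior ?_ (frontier_subset_closure hft) h1
      rwa [hO.interior_eq]
    rw [hO.interior_eq] at h2
    rw [hO.frontier_eq] at hfs
    exact hfs.2 h2
  rcases lt_trichotomy s t with h | h | h
  · exact absurd (key s t hs h hfs hft) not_false
  · exact h
  · exact absurd (key t s ht h hft hfs) not_false

lemma d_param {Ω : Set (EuclideanSpace ℝ (Fin n))} (hO : IsOpen Ω) (hC : Convex ℝ Ω)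
    {d : EuclideanSpace ℝ (Fin n) → EuclideanSpace ℝ (Fin n) → ℝ} (hd : IsHilbertDist Ω d)
    {x y : EuclideanSpace ℝ (Fin n)} (hx : x ∈ Ω) (hy : y ∈ Ω) (hxy : x ≠ y)
    {A B : ℝ} (hA : A < 0) (hB : 1 < B)
    (hfA : x + A • (y - x) ∈ frontier Ω) (hfB : x + B • (y - x) ∈ frontier Ω) :
    d x y = Real.log ((B / (B - 1)) * ((1 - A) / (-A))) := by
  obtain ⟨xb, hxb, yb, hyb, hxs, hys, hdf⟩ := hd.2 x hx y hy hxy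
  obtain ⟨A', hA', hwA⟩ := openSegment_param_left hxs
  obtain ⟨B', hB', hwB⟩ := openSegment_param_right hys
  have hvne : y - x ≠ 0 := sub_ne_zero.2 (Ne.symm hxy)
  have hAA : A' = A := by
    have h1 : x + (-A') • (-(y - x)) ∈ frontier Ω := by
      rw [show x + (-A') • (-(y - x)) = x + A' • (y - x) by module, ← hwA]; exact hxb
    have h2 : x + (-A) • (-(y - x)) ∈ frontier Ω := by
      rw [show x + (-A) • (-(y - x)) = x + A • (y - x) by module]; exact hfA
    have := frontier_unique hO hC hx (neg_pos.2 hA') (neg_pos.2 hA) h1 h2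
    linarith
  have hBB : B' = B := by
    have h1 : x + B' • (y - x) ∈ frontier Ω := by rw [← hwB]; exact hyb
    exact frontier_unique hO hC hx (by linarith) (by linarith) h1 hfB
  subst hAA hBB
  have hnv : (0:ℝ) < ‖y - x‖ := norm_pos_iff.2 hvne
  have e1 : yb - x = B' • (y - x) := by rw [hwB]; module
  have e2 : yb - y = (B' - 1) • (y - x) := by rw [hwB]; module
  have e3 : xb - y = (A' - 1) • (y - x) := by rw [hwA]; module
  have e4 : xb - x = A' • (y - x) := by rw [hwA]; module
  rw [hdf, e1, e2, e3, e4, norm_smul, norm_smul, norm_smul, norm_smul]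
  congr 1
  rw [Real.norm_eq_abs, Real.norm_eq_abs, Real.norm_eq_abs, Real.norm_eq_abs,
    abs_of_pos (by linarith : (0:ℝ) < B'), abs_of_pos (by linarith : (0:ℝ) < B' - 1),
    abs_of_neg (by linarith : A' - 1 < 0), abs_of_neg hA']
  rw [mul_div_mul_right _ _ (ne_of_gt hnv), mul_div_mul_right _ _ (ne_of_gt hnv)]
  ring_nf

lemma d_data {Ω : Set (EuclideanSpace ℝ (Fin n))} (hO : IsOpen Ω) (hC : Convex ℝ Ω)
    {d : EuclideanSpace ℝ (Fin n) → EuclideanSpace ℝ (Fin n) → ℝ} (hd : IsHilbertDist Ω d)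
    {x y : EuclideanSpace ℝ (Fin n)} (hx : x ∈ Ω) (hy : y ∈ Ω) (hxy : x ≠ y) :
    ∃ A B : ℝ, A < 0 ∧ 1 < B ∧ x + A • (y - x) ∈ frontier Ω ∧ x + B • (y - x) ∈ frontier Ω ∧
      d x y = Real.log ((B / (B - 1)) * ((1 - A) / (-A))) := by
  obtain ⟨xb, hxb, yb, hyb, hxs, hys, hdf⟩ := hd.2 x hx y hy hxy
  obtain ⟨A, hA, hwA⟩ := openSegment_param_left hxs
  obtain ⟨B, hB, hwB⟩ := openSegment_param_right hys
  have h1 : x + A • (y - x) ∈ frontier Ω := hwA ▸ hxb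
  have h2 : x + B • (y - x) ∈ frontier Ω := hwB ▸ hyb
  exact ⟨A, B, hA, hB, h1, h2, d_param hO hC hd hx hy hxy hA hB h1 h2⟩

lemma ratio_pos {A B : ℝ} (hA : A < 0) (hB : 1 < B) :
    1 < (B / (B - 1)) * ((1 - A) / (-A)) := by
  have h1 : 1 < B / (B - 1) := (one_lt_div (by linarith)).2 (by linarith)
  have h2 : 1 < (1 - A) / (-A) := (one_lt_div (by linarith)).2 (by linarith)
  nlinarith

lemma d_pos {Ω : Set (EuclideanSpace ℝ (Fin n))} (hO : IsOpen Ω) (hC : Convex ℝ Ω)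
    {d : EuclideanSpace ℝ (Fin n) → EuclideanSpace ℝ (Fin n) → ℝ} (hd : IsHilbertDist Ω d)
    {x y : EuclideanSpace ℝ (Fin n)} (hx : x ∈ Ω) (hy : y ∈ Ω) (hxy : x ≠ y) :
    0 < d x y := by
  obtain ⟨A, B, hA, hB, _, _, hdf⟩ := d_data hO hC hd hx hy hxy
  rw [hdf]
  exact Real.log_pos (ratio_pos hA hB)

lemma d_symm {Ω : Set (EuclideanSpace ℝ (Fin n))} (hO : IsOpen Ω) (hC : Convex ℝ Ω)
    {d : EuclideanSpace ℝ (Fin n) → EuclideanSpace ℝ (Fin n) → ℝ} (hd : IsHilbertDist Ω d)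
    {x y : EuclideanSpace ℝ (Fin n)} (hx : x ∈ Ω) (hy : y ∈ Ω) :
    d x y = d y x := by
  rcases eq_or_ne x y with rfl | hxy
  · rfl
  obtain ⟨A, B, hA, hB, hfA, hfB, hdf⟩ := d_data hO hC hd hx hy hxy
  have h1 : y + (1 - B) • (x - y) ∈ frontier Ω := by
    rw [show y + (1 - B) • (x - y) = x + B • (y - x) by module]; exact hfB
  have h2 : y + (1 - A) • (x - y) ∈ frontier Ω := by
    rw [show y + (1 - A) • (x - y) = x + A • (y - x) by module]; exact hfA
  rw [hdf, d_param hO hC hd hy hx hxy.symm (by linarith : 1 - B < 0) (by linarith : 1 < 1 - A) h1 h2]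
  congr 1
  have hA0 : -A ≠ 0 := by linarith
  have hB1 : B - 1 ≠ 0 := by linarith
  rw [show (1:ℝ) - A - 1 = -A by ring, show (1:ℝ) - (1 - B) = B by ring, show -(1 - B) = B - 1 by ring]
  ring

lemma d_additive {Ω : Set (EuclideanSpace ℝ (Fin n))} (hO : IsOpen Ω) (hC : Convex ℝ Ω)
    {d : EuclideanSpace ℝ (Fin n) → EuclideanSpace ℝ (Fin n) → ℝ} (hd : IsHilbertDist Ω d)
    {x y z : EuclideanSpace ℝ (Fin n)} (hx : x ∈ Ω) (hy : y ∈ Ω) (hz : z ∈ Ω) (hxy : x ≠ y)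
    {t : ℝ} (ht0 : 0 < t) (ht1 : t < 1) (hzt : z = x + t • (y - x)) :
    d x y = d x z + d z y := by
  obtain ⟨A, B, hA, hB, hfA, hfB, hdf⟩ := d_data hO hC hd hx hy hxy
  have ht : t ≠ 0 := ne_of_gt ht0
  have h1t : (1:ℝ) - t ≠ 0 := by linarith
  have hvne : y - x ≠ 0 := sub_ne_zero.2 hxy.symm
  have hzx : z ≠ x := by
    rw [hzt]; intro h
    have h0 : t • (y - x) = 0 := by
      have := sub_eq_zero.2 h; simpa using this
    rcases smul_eq_zero.1 h0 with h' | h'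
    · exact ht h'
    · exact hvne h'
  have hzy : z ≠ y := by
    rw [hzt]; intro h
    have h0 : (t - 1) • (y - x) = 0 := by
      rw [sub_smul, one_smul]
      have : x + t • (y - x) - y = t • (y - x) - (y - x) := by module
      rw [← this, h, sub_self]
    rcases smul_eq_zero.1 h0 with h' | h'
    · exact h1t (by linarith [h'])
    · exact hvne h'
  -- frontier points for the pair (x, z)
  have hfA2 : x + (A / t) • (z - x) ∈ frontier Ω := by
    have : x + (A / t) • (z - x) = x + A • (y - x) := by
      rw [hzt]; match_scalars <;> field_simp <;> try ring
    rw [this]; exact hfA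
  have hfB2 : x + (B / t) • (z - x) ∈ frontier Ω := by
    have : x + (B / t) • (z - x) = x + B • (y - x) := by
      rw [hzt]; match_scalars <;> field_simp <;> try ring
    rw [this]; exact hfB
  have hdxz : d x z = Real.log ((B / t / (B / t - 1)) * ((1 - A / t) / (-(A / t)))) :=
    d_param hO hC hd hx hz hzx.symm (div_neg_of_neg_of_pos hA ht0)
      ((one_lt_div ht0).2 (by linarith)) hfA2 hfB2
  -- frontier points for the pair (z, y)
  have hfA3 : z + ((A - t) / (1 - t)) • (y - z) ∈ frontier Ω := by
    have : z + ((A - t) / (1 - t)) • (y - z) = x + A • (y - x) := by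
      rw [hzt]; match_scalars <;> field_simp <;> try ring
    rw [this]; exact hfA
  have hfB3 : z + ((B - t) / (1 - t)) • (y - z) ∈ frontier Ω := by
    have : z + ((B - t) / (1 - t)) • (y - z) = x + B • (y - x) := by
      rw [hzt]; match_scalars <;> field_simp <;> try ring
    rw [this]; exact hfB
  have hdzy : d z y = Real.log ((((B - t) / (1 - t)) / ((B - t) / (1 - t) - 1)) *
      ((1 - (A - t) / (1 - t)) / (-((A - t) / (1 - t))))) :=
    d_param hO hC hd hz hy hzy
      (div_neg_of_neg_of_pos (by linarith) (by linarith))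
      ((one_lt_div (by linarith : (0:ℝ) < 1 - t)).2 (by linarith)) hfA3 hfB3
  have hA0 : A ≠ 0 := ne_of_lt hA
  have hBt : B - t ≠ 0 := by intro h; linarith
  have hB1 : B - 1 ≠ 0 := by intro h; linarith
  have htA : t - A ≠ 0 := by intro h; linarith
  have r1 : B / t / (B / t - 1) * ((1 - A / t) / -(A / t)) = B * (t - A) / ((B - t) * -A) := by
    field_simp
  have r2 : (B - t) / (1 - t) / ((B - t) / (1 - t) - 1) *
      ((1 - (A - t) / (1 - t)) / -((A - t) / (1 - t))) = (B - t) * (1 - A) / ((B - 1) * (t - A)) := by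
    have hAt : A - t ≠ 0 := by intro h; linarith
    have hB1' : B - t - (1 - t) ≠ 0 := by intro h; linarith
    field_simp
    ring
  rw [hdf, hdxz, hdzy, r1, r2]
  have hp1 : (0:ℝ) < B * (t - A) / ((B - t) * -A) := by
    apply div_pos <;> nlinarith
  have hp2 : (0:ℝ) < (B - t) * (1 - A) / ((B - 1) * (t - A)) := by
    apply div_pos <;> nlinarith
  rw [← Real.log_mul (ne_of_gt hp1) (ne_of_gt hp2)]
  congr 1
  field_simp

set_option maxHeartbeats 1000000 in
lemma d_strict_far {Ω : Set (EuclideanSpace ℝ (Fin n))} (hO : IsOpen Ω) (hC : Convex ℝ Ω)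
    {d : EuclideanSpace ℝ (Fin n) → EuclideanSpace ℝ (Fin n) → ℝ} (hd : IsHilbertDist Ω d)
    {x y z : EuclideanSpace ℝ (Fin n)} (hx : x ∈ Ω) (hy : y ∈ Ω) (hz : z ∈ Ω) (hxy : x ≠ y)
    {t : ℝ} (ht1 : 1 < t) (hzt : z = x + t • (y - x)) :
    d x y < d x z + d z y := by
  obtain ⟨A, B, hA, hB, hfA, hfB, hdf⟩ := d_data hO hC hd hx hy hxy
  have ht0 : (0:ℝ) < t := by linarith
  have ht : t ≠ 0 := ne_of_gt ht0
  have h1t : (1:ℝ) - t ≠ 0 := by intro h; linarith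
  have hvne : y - x ≠ 0 := sub_ne_zero.2 hxy.symm
  have hfront : x + B • (y - x) ∉ Ω := by
    rw [hO.frontier_eq] at hfB; exact hfB.2
  have hzx : z ≠ x := by
    rw [hzt]; intro h
    have h0 : t • (y - x) = 0 := by have := sub_eq_zero.2 h; simpa using this
    rcases smul_eq_zero.1 h0 with h' | h'
    · exact ht h'
    · exact hvne h'
  have hzy : z ≠ y := by
    rw [hzt]; intro h
    have h0 : (t - 1) • (y - x) = 0 := by
      rw [sub_smul, one_smul]
      have e : x + t • (y - x) - y = t • (y - x) - (y - x) := by module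
      rw [← e, h, sub_self]
    rcases smul_eq_zero.1 h0 with h' | h'
    · exact h1t (by linarith [h'])
    · exact hvne h'
  -- B > t
  have htB : t < B := by
    rcases lt_trichotomy t B with h | h | h
    · exact h
    · exfalso; apply hfront; rw [← h, ← hzt]; exact hz
    · exfalso
      apply hfront
      have hmem : x + B • (y - x) ∈ openSegment ℝ x z := by
        have h0 : x + (B / t) • (z - x) ∈ openSegment ℝ (x + (0:ℝ) • (z - x)) (x + (1:ℝ) • (z - x)) :=
          mem_openSegment_param x (z - x) (by positivity) ((div_lt_one ht0).2 h)
      -- rewrite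
        have e1 : x + (0:ℝ) • (z - x) = x := by module
        have e2 : x + (1:ℝ) • (z - x) = z := by module
        have e3 : x + (B / t) • (z - x) = x + B • (y - x) := by
          rw [hzt]; match_scalars <;> field_simp <;> try ring
        rwa [e1, e2, e3] at h0
      exact hC.openSegment_subset hx hz hmem
  -- d x z
  have hfA2 : x + (A / t) • (z - x) ∈ frontier Ω := by
    have e : x + (A / t) • (z - x) = x + A • (y - x) := by
      rw [hzt]; match_scalars <;> field_simp <;> try ring
    rw [e]; exact hfA
  have hfB2 : x + (B / t) • (z - x) ∈ frontier Ω := by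
    have e : x + (B / t) • (z - x) = x + B • (y - x) := by
      rw [hzt]; match_scalars <;> field_simp <;> try ring
    rw [e]; exact hfB
  have hdxz : d x z = Real.log ((B / t / (B / t - 1)) * ((1 - A / t) / (-(A / t)))) :=
    d_param hO hC hd hx hz hzx.symm (div_neg_of_neg_of_pos hA ht0)
      ((one_lt_div ht0).2 htB) hfA2 hfB2
  -- d z y : A₃ = (B-t)/(1-t) < 0, B₃ = (A-t)/(1-t) > 1
  have hfA3 : z + ((B - t) / (1 - t)) • (y - z) ∈ frontier Ω := by
    have e : z + ((B - t) / (1 - t)) • (y - z) = x + B • (y - x) := by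
      rw [hzt]; match_scalars <;> field_simp <;> try ring
    rw [e]; exact hfB
  have hfB3 : z + ((A - t) / (1 - t)) • (y - z) ∈ frontier Ω := by
    have e : z + ((A - t) / (1 - t)) • (y - z) = x + A • (y - x) := by
      rw [hzt]; match_scalars <;> field_simp <;> try ring
    rw [e]; exact hfA
  have hA3 : (B - t) / (1 - t) < 0 := div_neg_of_pos_of_neg (by linarith) (by linarith)
  have hB3 : 1 < (A - t) / (1 - t) := by
    rw [show A - t = -(t - A) by ring, show (1:ℝ) - t = -(t - 1) by ring, neg_div_neg_eq]
    exact (one_lt_div (by linarith)).2 (by linarith)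
  have hdzy : d z y = Real.log (((A - t) / (1 - t) / ((A - t) / (1 - t) - 1)) *
      ((1 - (B - t) / (1 - t)) / (-((B - t) / (1 - t))))) :=
    d_param hO hC hd hz hy hzy hA3 hB3 hfA3 hfB3
  -- simplify
  have hA0 : A ≠ 0 := ne_of_lt hA
  have hBt : B - t ≠ 0 := by intro h; linarith
  have hB1 : B - 1 ≠ 0 := by intro h; linarith
  have htA : t - A ≠ 0 := by intro h; linarith
  have hA1 : A - 1 ≠ 0 := by intro h; linarith
  have r1 : B / t / (B / t - 1) * ((1 - A / t) / -(A / t)) = B * (t - A) / ((B - t) * -A) := by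
    field_simp
  have r2 : (A - t) / (1 - t) / ((A - t) / (1 - t) - 1) *
      ((1 - (B - t) / (1 - t)) / -((B - t) / (1 - t)))
      = (t - A) * (B - 1) / ((1 - A) * (B - t)) := by
    rw [div_sub_one h1t, one_sub_div h1t, ← neg_div]
    have hA1' : 1 - A ≠ 0 := by intro h; linarith
    have e1 : A - t - (1 - t) = A - 1 := by ring
    have e2 : 1 - t - (B - t) = 1 - B := by ring
    rw [e1, e2, div_div_div_cancel_right₀ h1t, div_div_div_cancel_right₀ h1t]
    field_simp
    ring
  rw [hdf, hdxz, hdzy, r1, r2]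
  have hp1 : (0:ℝ) < B * (t - A) / ((B - t) * -A) := by apply div_pos <;> nlinarith
  have hp2 : (0:ℝ) < (t - A) * (B - 1) / ((1 - A) * (B - t)) := by apply div_pos <;> nlinarith
  have hp0 : (0:ℝ) < B / (B - 1) * ((1 - A) / -A) := by
    apply mul_pos <;> apply div_pos <;> nlinarith
  rw [← Real.log_mul (ne_of_gt hp1) (ne_of_gt hp2)]
  apply Real.log_lt_log hp0
  have hq0 : B / (B - 1) * ((1 - A) / -A) = B * (1 - A) / ((B - 1) * -A) :=
    div_mul_div_comm _ _ _ _
  have h1 : B * (t - A) / ((B - t) * -A) * ((t - A) * (B - 1) / ((1 - A) * (B - t)))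
      = (B * (t - A) * ((t - A) * (B - 1))) / (((B - t) * -A) * ((1 - A) * (B - t))) :=
    div_mul_div_comm _ _ _ _
  have p1 : (0:ℝ) < B - t := by linarith
  have p2 : (0:ℝ) < -A := by linarith
  have p3 : (0:ℝ) < 1 - A := by linarith
  have p4 : (0:ℝ) < B - 1 := by linarith
  rw [hq0, h1, div_lt_div_iff₀ (mul_pos p4 p2) (mul_pos (mul_pos p1 p2) (mul_pos p3 p1))]
  have hS : (0:ℝ) < (1 - A) * (B - t) := mul_pos p3 p1
  have hS2 : (1 - A) * (B - t) < (t - A) * (B - 1) := by nlinarith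
  have hsq : ((1 - A) * (B - t)) * ((1 - A) * (B - t)) < ((t - A) * (B - 1)) * ((t - A) * (B - 1)) :=
    mul_self_lt_mul_self (le_of_lt hS) hS2
  nlinarith [mul_pos (by linarith : (0:ℝ) < B) p2, hsq]

set_option maxHeartbeats 1000000 in
lemma noncol_contradiction {Ω : Set (EuclideanSpace ℝ (Fin n))} (hO : IsOpen Ω) (hC : Convex ℝ Ω)
    (hstrict : ∀ p q : EuclideanSpace ℝ (Fin n), p ≠ q → ¬ segment ℝ p q ⊆ frontier Ω)
    {d : EuclideanSpace ℝ (Fin n) → EuclideanSpace ℝ (Fin n) → ℝ} (hd : IsHilbertDist Ω d)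
    {x y z : EuclideanSpace ℝ (Fin n)} (hx : x ∈ Ω) (hy : y ∈ Ω) (hz : z ∈ Ω)
    (hxy : x ≠ y) (hzx : z ≠ x) (hzy : z ≠ y)
    (hncol : ∀ t : ℝ, z ≠ x + t • (y - x))
    (heq : d x y = d x z + d z y) : False := by
  obtain ⟨A, B, hA, hB, hfA, hfB, hdf⟩ := d_data hO hC hd hx hy hxy
  obtain ⟨A₂, B₂, hA₂, hB₂, hfA₂, hfB₂, hdxz⟩ := d_data hO hC hd hx hz hzx.symm
  obtain ⟨A₃, B₃, hA₃, hB₃, hfA₃, hfB₃, hdzy⟩ := d_data hO hC hd hz hy hzy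
  have hdisj : ∀ u, u ∈ frontier Ω → u ∉ Ω := by
    intro u hu; rw [hO.frontier_eq] at hu; exact hu.2
  -- supporting functional at a := x + B • (y - x)
  obtain ⟨φ, hφ⟩ := geometric_hahn_banach_open_point hC hO (hdisj _ hfB)
  -- supporting functional at a' := x + A • (y - x)
  obtain ⟨ψ, hψ⟩ := geometric_hahn_banach_open_point hC hO (hdisj _ hfA)
  have hφcl : ∀ u ∈ closure Ω, φ u ≤ φ (x + B • (y - x)) := fun u hu =>
    closure_minimal (fun v hv => (le_of_lt (hφ v hv) : v ∈ φ ⁻¹' Set.Iic _))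
      (isClosed_Iic.preimage φ.continuous) hu
  have hψcl : ∀ u ∈ closure Ω, ψ u ≤ ψ (x + A • (y - x)) := fun u hu =>
    closure_minimal (fun v hv => (le_of_lt (hψ v hv) : v ∈ ψ ⁻¹' Set.Iic _))
      (isClosed_Iic.preimage ψ.continuous) hu
  -- scalar abbreviations
  set α := φ (x + B • (y - x)) with hα
  set α' := ψ (x + A • (y - x)) with hα'
  have eα : α = φ x + B * (φ y - φ x) := by rw [hα]; simp [map_add, map_smul, map_sub]
  have eα' : α' = ψ x + A * (ψ y - ψ x) := by rw [hα']; simp [map_add, map_smul, map_sub]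
  have hpx : 0 < α - φ x := sub_pos.2 (hφ x hx)
  have hpy : 0 < α - φ y := sub_pos.2 (hφ y hy)
  have hpz : 0 < α - φ z := sub_pos.2 (hφ z hz)
  have hqx : 0 < α' - ψ x := sub_pos.2 (hψ x hx)
  have hqy : 0 < α' - ψ y := sub_pos.2 (hψ y hy)
  have hqz : 0 < α' - ψ z := sub_pos.2 (hψ z hz)
  -- boundary evaluations
  have hφb : φ x + B₂ * (φ z - φ x) ≤ α := by
    have := hφcl _ (frontier_subset_closure hfB₂)
    simpa [map_add, map_smul, map_sub] using this
  have hφc : φ z + B₃ * (φ y - φ z) ≤ α := by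
    have := hφcl _ (frontier_subset_closure hfB₃)
    simpa [map_add, map_smul, map_sub] using this
  have hψb : ψ x + A₂ * (ψ z - ψ x) ≤ α' := by
    have := hψcl _ (frontier_subset_closure hfA₂)
    simpa [map_add, map_smul, map_sub] using this
  have hψc : ψ z + A₃ * (ψ y - ψ z) ≤ α' := by
    have := hψcl _ (frontier_subset_closure hfA₃)
    simpa [map_add, map_smul, map_sub] using this
  -- exact ratios
  have hu1w1 : B / (B - 1) = ((α - φ x) / (α - φ z)) * ((α - φ z) / (α - φ y)) := by
    rw [div_mul_div_cancel₀ (ne_of_gt hpz)]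
    rw [div_eq_div_iff (show (B:ℝ) - 1 ≠ 0 by intro h; linarith) (ne_of_gt hpy)]
    linear_combination eα
  have hr1s1 : (1 - A) / (-A) = ((α' - ψ y) / (α' - ψ z)) * ((α' - ψ z) / (α' - ψ x)) := by
    rw [div_mul_div_cancel₀ (ne_of_gt hqz)]
    rw [div_eq_div_iff (show (-A:ℝ) ≠ 0 by intro h; rw [neg_eq_zero] at h; linarith) (ne_of_gt hqx)]
    linear_combination eα'
  -- inequalities
  have hu : (α - φ x) / (α - φ z) ≤ B₂ / (B₂ - 1) := by
    rw [div_le_div_iff₀ hpz (by linarith)]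
    nlinarith [hφb]
  have hw : (α - φ z) / (α - φ y) ≤ B₃ / (B₃ - 1) := by
    rw [div_le_div_iff₀ hpy (by linarith)]
    nlinarith [hφc]
  have hs : (α' - ψ z) / (α' - ψ x) ≤ (1 - A₂) / (-A₂) := by
    rw [div_le_div_iff₀ hqx (by linarith)]
    nlinarith [hψb]
  have hr : (α' - ψ y) / (α' - ψ z) ≤ (1 - A₃) / (-A₃) := by
    rw [div_le_div_iff₀ hqz (by linarith)]
    nlinarith [hψc]
  -- positivity of all ratios
  have pu1 : 0 < (α - φ x) / (α - φ z) := div_pos hpx hpz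
  have pw1 : 0 < (α - φ z) / (α - φ y) := div_pos hpz hpy
  have pr1 : 0 < (α' - ψ y) / (α' - ψ z) := div_pos hqy hqz
  have ps1 : 0 < (α' - ψ z) / (α' - ψ x) := div_pos hqz hqx
  have pu2 : 0 < B₂ / (B₂ - 1) := div_pos (by linarith) (by linarith)
  have pw2 : 0 < B₃ / (B₃ - 1) := div_pos (by linarith) (by linarith)
  have ps2 : 0 < (1 - A₂) / (-A₂) := div_pos (by linarith) (by linarith)
  have pr2 : 0 < (1 - A₃) / (-A₃) := div_pos (by linarith) (by linarith)
  -- expand logs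
  have hdxy' : d x y = Real.log ((α - φ x) / (α - φ z)) + Real.log ((α - φ z) / (α - φ y))
      + (Real.log ((α' - ψ y) / (α' - ψ z)) + Real.log ((α' - ψ z) / (α' - ψ x))) := by
    rw [hdf, hu1w1, hr1s1, Real.log_mul (by positivity) (by positivity),
      Real.log_mul (ne_of_gt pu1) (ne_of_gt pw1), Real.log_mul (ne_of_gt pr1) (ne_of_gt ps1)]
  have hdxz' : d x z = Real.log (B₂ / (B₂ - 1)) + Real.log ((1 - A₂) / (-A₂)) := by
    rw [hdxz, Real.log_mul (ne_of_gt pu2) (ne_of_gt ps2)]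
  have hdzy' : d z y = Real.log (B₃ / (B₃ - 1)) + Real.log ((1 - A₃) / (-A₃)) := by
    rw [hdzy, Real.log_mul (ne_of_gt pw2) (ne_of_gt pr2)]
  have lu : Real.log ((α - φ x) / (α - φ z)) ≤ Real.log (B₂ / (B₂ - 1)) :=
    (Real.log_le_log_iff pu1 pu2).2 hu
  have lw : Real.log ((α - φ z) / (α - φ y)) ≤ Real.log (B₃ / (B₃ - 1)) :=
    (Real.log_le_log_iff pw1 pw2).2 hw
  have ls : Real.log ((α' - ψ z) / (α' - ψ x)) ≤ Real.log ((1 - A₂) / (-A₂)) :=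
    (Real.log_le_log_iff ps1 ps2).2 hs
  have lr : Real.log ((α' - ψ y) / (α' - ψ z)) ≤ Real.log ((1 - A₃) / (-A₃)) :=
    (Real.log_le_log_iff pr1 pr2).2 hr
  rw [hdxy', hdxz', hdzy'] at heq
  have elu : Real.log ((α - φ x) / (α - φ z)) = Real.log (B₂ / (B₂ - 1)) := by linarith
  have elw : Real.log ((α - φ z) / (α - φ y)) = Real.log (B₃ / (B₃ - 1)) := by linarith
  have eu : (α - φ x) / (α - φ z) = B₂ / (B₂ - 1) :=
    Real.log_injOn_pos (Set.mem_Ioi.2 pu1) (Set.mem_Ioi.2 pu2) elu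
  have ew : (α - φ z) / (α - φ y) = B₃ / (B₃ - 1) :=
    Real.log_injOn_pos (Set.mem_Ioi.2 pw1) (Set.mem_Ioi.2 pw2) elw
  -- equality forces boundary points on the hyperplane
  have hφbeq : φ x + B₂ * (φ z - φ x) = α := by
    rw [div_eq_div_iff (ne_of_gt hpz) (show (B₂:ℝ) - 1 ≠ 0 by intro h; linarith)] at eu
    linear_combination eu
  have hφceq : φ z + B₃ * (φ y - φ z) = α := by
    rw [div_eq_div_iff (ne_of_gt hpy) (show (B₃:ℝ) - 1 ≠ 0 by intro h; linarith)] at ew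
    linear_combination ew
  -- b ≠ c
  have hbc : x + B₂ • (z - x) ≠ z + B₃ • (y - z) := by
    intro h
    have hk : B₂ - 1 + B₃ ≠ 0 := by intro h'; linarith
    have e0 : (B₂ - 1 + B₃) • z - ((B₂ - 1) • x + B₃ • y)
        = x + B₂ • (z - x) - (z + B₃ • (y - z)) := by module
    have e1 : (B₂ - 1 + B₃) • z = (B₂ - 1) • x + B₃ • y := by
      have := e0.trans (sub_eq_zero.2 h)
      exact sub_eq_zero.1 this
    have e2 : z = (B₂ - 1 + B₃)⁻¹ • ((B₂ - 1) • x + B₃ • y) := by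
      rw [← e1, inv_smul_smul₀ hk]
    apply hncol (B₃ / (B₂ - 1 + B₃))
    rw [e2]; match_scalars <;> field_simp <;> try ring
  -- the segment from b to c lies in the frontier
  apply hstrict _ _ hbc
  intro u hu
  have hucl : u ∈ closure Ω := hC.closure.segment_subset
    (frontier_subset_closure hfB₂) (frontier_subset_closure hfB₃) hu
  have hφu : φ u = α := by
    rw [segment_eq_image ℝ] at hu
    obtain ⟨θ, ⟨hθ0, hθ1⟩, rfl⟩ := hu
    have h1 : φ (x + B₂ • (z - x)) = α := by
      rw [map_add, map_smul, map_sub, smul_eq_mul]; linarith [hφbeq]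
    have h2 : φ (z + B₃ • (y - z)) = α := by
      rw [map_add, map_smul, map_sub, smul_eq_mul]; linarith [hφceq]
    rw [map_add, map_smul, map_smul, smul_eq_mul, smul_eq_mul, h1, h2]
    ring
  rw [hO.frontier_eq]
  refine ⟨hucl, fun hu' => ?_⟩
  have := hφ u hu'
  rw [hφu] at this
  exact lt_irrefl α this

end HilbertHelpers

/-- in a strictly convex bounded open domain (no nondegenerate segment
in the frontier) the affine segment is the unique geodesic between any two points. -/
theorem hilbert_unique_geodesics_of_strictly_convex {n : ℕ}
    (Ω : Set (EuclideanSpace ℝ (Fin n)))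
    (hne : Ω.Nonempty) (hO : IsOpen Ω) (hB : Bornology.IsBounded Ω) (hC : Convex ℝ Ω)
    (hstrict : ∀ p q : EuclideanSpace ℝ (Fin n), p ≠ q → ¬ segment ℝ p q ⊆ frontier Ω)
    (d : EuclideanSpace ℝ (Fin n) → EuclideanSpace ℝ (Fin n) → ℝ)
    (hd : IsHilbertDist Ω d) :
    ∀ x ∈ Ω, ∀ y ∈ Ω, ∀ z ∈ Ω,
      (d x y = d x z + d z y ↔ z ∈ segment ℝ x y) := by
  intro x hx y hy z hz
  constructor
  · intro heq
    rcases eq_or_ne z x with rfl | hzx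
    · exact left_mem_segment ℝ z y
    rcases eq_or_ne z y with rfl | hzy
    · exact right_mem_segment ℝ x z
    rcases eq_or_ne x y with rfl | hxy
    · exfalso
      have h0 := hd.1 x
      have p1 := d_pos hO hC hd hx hz (Ne.symm hzx)
      have p2 := d_pos hO hC hd hz hx hzx
      rw [h0] at heq
      linarith
    by_cases hcol : ∃ t : ℝ, z = x + t • (y - x)
    · obtain ⟨t, hzt⟩ := hcol
      by_cases ht1 : 1 < t
      · exfalso
        have := d_strict_far hO hC hd hx hy hz hxy ht1 hzt
        linarith
      by_cases ht0 : t < 0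
      · exfalso
        have e1 := d_symm hO hC hd hx hy
        have e2 := d_symm hO hC hd hx hz
        have e3 := d_symm hO hC hd hz hy
        have hzt' : z = y + (1 - t) • (x - y) := by rw [hzt]; module
        have := d_strict_far hO hC hd hy hx hz (Ne.symm hxy) (by linarith) hzt'
        linarith
    -- 0 ≤ t ≤ 1
      · push_neg at ht1 ht0
        rw [segment_eq_image']
        exact ⟨t, ⟨ht0, ht1⟩, hzt.symm⟩
    · exact absurd heq (by
        intro heq'
        exact noncol_contradiction hO hC hstrict hd hx hy hz hxy hzx hzy
          (not_exists.1 hcol) heq')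
  · intro hseg
    rcases eq_or_ne z x with rfl | hzx
    · rw [hd.1 z]; ring
    rcases eq_or_ne z y with rfl | hzy
    · rw [hd.1 z]; ring
    rcases eq_or_ne x y with rfl | hxy
    · exfalso
      rw [segment_same] at hseg
      exact hzx hseg
    rw [segment_eq_image'] at hseg
    obtain ⟨t, ⟨ht0, ht1⟩, hzt⟩ := hseg
    have ht0' : 0 < t := by
      rcases lt_or_eq_of_le ht0 with h | h
      · exact h
      · exfalso; apply hzx; rw [← hzt, ← h]; module
    have ht1' : t < 1 := by
      rcases lt_or_eq_of_le ht1 with h | h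
      · exact h
      · exfalso; apply hzy; rw [← hzt, h]; module
    exact d_additive hO hC hd hx hy hz hxy ht0' ht1' hzt.symm
end

section
/- Let Ω be a bounded open convex subset of ℝⁿ with Hilbert distance d_Ω. Let A be an n×n real matrix, b, c ∈ ℝⁿ and δ ∈ ℝ such that the (n+1)×(n+1) block matrix M = [[A, b],[cᵀ, δ]] is invertible and ⟨c,x⟩ + δ ≠ 0 for every x in the closure of Ω, and define f(x) = (A·x + b)/(⟨c,x⟩ + δ). Then f(Ω) is a bounded open convex subset of ℝⁿ, and for all x, y ∈ Ω one has d_{f(Ω)}(f(x), f(y)) = d_Ω(x, y); that is, f restricts to an isometry from (Ω, d_Ω) onto (f(Ω), d_{f(Ω)}). -/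
namespace HilbertAux

open Matrix in
noncomputable def lft {n : ℕ} (x : EuclideanSpace ℝ (Fin n)) : (Fin n ⊕ Fin 1) → ℝ :=
  Sum.elim (fun i => x i) (fun _ => 1)

noncomputable def denP {n : ℕ} (P : Matrix (Fin n ⊕ Fin 1) (Fin n ⊕ Fin 1) ℝ)
    (x : EuclideanSpace ℝ (Fin n)) : ℝ :=
  P.mulVec (lft x) (Sum.inr 0)

noncomputable def imgP {n : ℕ} (P : Matrix (Fin n ⊕ Fin 1) (Fin n ⊕ Fin 1) ℝ)
    (x : EuclideanSpace ℝ (Fin n)) : EuclideanSpace ℝ (Fin n) :=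
  (denP P x)⁻¹ • (WithLp.equiv 2 (Fin n → ℝ)).symm (fun i => P.mulVec (lft x) (Sum.inl i))

variable {n : ℕ}

lemma denP_projMat (A : Matrix (Fin n) (Fin n) ℝ) (b c : EuclideanSpace ℝ (Fin n)) (δ : ℝ)
    (x : EuclideanSpace ℝ (Fin n)) :
    denP (projMat A b c δ) x = (∑ i, c i * x i) + δ := by
  simp [denP, projMat, Matrix.fromBlocks_mulVec, Matrix.mulVec, dotProduct,
    Matrix.replicateRow, Matrix.replicateCol, lft]

lemma imgP_projMat (A : Matrix (Fin n) (Fin n) ℝ) (b c : EuclideanSpace ℝ (Fin n)) (δ : ℝ)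
    (x : EuclideanSpace ℝ (Fin n)) :
    imgP (projMat A b c δ) x = fracLin A b c δ x := by
  unfold imgP fracLin
  rw [denP_projMat]
  congr 1
  ext i
  simp [projMat, Matrix.fromBlocks_mulVec, Matrix.mulVec, dotProduct,
    Matrix.replicateRow, Matrix.replicateCol, lft, WithLp.equiv_symm_apply, PiLp.toLp_apply]

lemma lft_imgP {P : Matrix (Fin n ⊕ Fin 1) (Fin n ⊕ Fin 1) ℝ}
    {x : EuclideanSpace ℝ (Fin n)} (h : denP P x ≠ 0) :
    lft (imgP P x) = (denP P x)⁻¹ • P.mulVec (lft x) := by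
  funext j
  cases j with
  | inl i => simp [lft, imgP, WithLp.equiv_symm_apply, PiLp.toLp_apply, PiLp.smul_apply, smul_eq_mul]
  | inr i =>
    have : i = 0 := Subsingleton.elim _ _
    subst this
    simp only [lft, Sum.elim_inr, Pi.smul_apply, smul_eq_mul]
    rw [show P.mulVec (Sum.elim (fun i => x i) fun _ => 1) (Sum.inr 0) = denP P x from rfl,
      inv_mul_cancel₀ h]

lemma denP_imgP {P Q : Matrix (Fin n ⊕ Fin 1) (Fin n ⊕ Fin 1) ℝ} (hQP : Q * P = 1)
    {x : EuclideanSpace ℝ (Fin n)} (h : denP P x ≠ 0) :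
    denP Q (imgP P x) = (denP P x)⁻¹ := by
  unfold denP
  rw [lft_imgP h, Matrix.mulVec_smul, Matrix.mulVec_mulVec, hQP, Matrix.one_mulVec]
  simp [lft, smul_eq_mul]
  rfl

lemma imgP_imgP {P Q : Matrix (Fin n ⊕ Fin 1) (Fin n ⊕ Fin 1) ℝ} (hQP : Q * P = 1)
    {x : EuclideanSpace ℝ (Fin n)} (h : denP P x ≠ 0) :
    imgP Q (imgP P x) = x := by
  rw [imgP, denP_imgP hQP h, lft_imgP h, inv_inv]
  ext i
  simp only [Matrix.mulVec_smul, Matrix.mulVec_mulVec, hQP, Matrix.one_mulVec,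
    WithLp.equiv_symm_apply, PiLp.toLp_apply, PiLp.smul_apply, Pi.smul_apply, smul_eq_mul]
  rw [mul_inv_cancel_left₀ h]
  rfl

lemma continuous_lft : Continuous (lft (n := n)) := by
  apply continuous_pi
  intro j
  cases j with
  | inl i =>
    exact (continuous_apply i).comp
      (PiLp.continuousLinearEquiv 2 ℝ (fun _ : Fin n => ℝ)).continuous
  | inr i => exact continuous_const

lemma continuous_mulVec_lft (P : Matrix (Fin n ⊕ Fin 1) (Fin n ⊕ Fin 1) ℝ) :
    Continuous (fun x : EuclideanSpace ℝ (Fin n) => P.mulVec (lft x)) := by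
  have h1 : Continuous (fun v : Fin n ⊕ Fin 1 → ℝ => P.mulVec v) := by
    have := P.mulVecLin.continuous_of_finiteDimensional
    exact this
  exact h1.comp continuous_lft

lemma continuous_denP (P : Matrix (Fin n ⊕ Fin 1) (Fin n ⊕ Fin 1) ℝ) :
    Continuous (denP P) :=
  (continuous_apply (Sum.inr 0)).comp (continuous_mulVec_lft P)

lemma continuousOn_imgP (P : Matrix (Fin n ⊕ Fin 1) (Fin n ⊕ Fin 1) ℝ) :
    ContinuousOn (imgP P) {x | denP P x ≠ 0} := by
  refine ContinuousOn.smul (f := fun x => (denP P x)⁻¹)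
    (g := fun x => (WithLp.equiv 2 (Fin n → ℝ)).symm (fun i => P.mulVec (lft x) (Sum.inl i))) ?_ ?_
  · exact ((continuous_denP P).continuousOn).inv₀ (fun x hx => hx)
  · apply Continuous.continuousOn
    apply Continuous.comp (PiLp.continuousLinearEquiv 2 ℝ (fun _ : Fin n => ℝ)).symm.continuous
    exact continuous_pi fun i => (continuous_apply (Sum.inl i)).comp (continuous_mulVec_lft P)

lemma L_comb (c : EuclideanSpace ℝ (Fin n)) (δ : ℝ) (p q : ℝ) (hpq : p + q = 1)
    (x y : EuclideanSpace ℝ (Fin n)) :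
    (∑ i, c i * (p • x + q • y) i) + δ
      = p * ((∑ i, c i * x i) + δ) + q * ((∑ i, c i * y i) + δ) := by
  simp only [PiLp.add_apply, PiLp.smul_apply, smul_eq_mul]
  rw [show (∑ i, c i * (p * x i + q * y i))
      = p * (∑ i, c i * x i) + q * (∑ i, c i * y i) from by
    rw [Finset.mul_sum, Finset.mul_sum, ← Finset.sum_add_distrib]
    exact Finset.sum_congr rfl fun i _ => by ring]
  linear_combination δ * hpq.symm

lemma fracLin_comb (A : Matrix (Fin n) (Fin n) ℝ) (b c : EuclideanSpace ℝ (Fin n)) (δ : ℝ)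
    (p q : ℝ) (hpq : p + q = 1) (x y : EuclideanSpace ℝ (Fin n))
    (hx : (∑ i, c i * x i) + δ ≠ 0) (hy : (∑ i, c i * y i) + δ ≠ 0)
    (hw : (∑ i, c i * (p • x + q • y) i) + δ ≠ 0) :
    fracLin A b c δ (p • x + q • y)
      = ((p * ((∑ i, c i * x i) + δ)) / ((∑ i, c i * (p • x + q • y) i) + δ)) • fracLin A b c δ x
      + ((q * ((∑ i, c i * y i) + δ)) / ((∑ i, c i * (p • x + q • y) i) + δ)) • fracLin A b c δ y := by
  have hN : ((WithLp.equiv 2 (Fin n → ℝ)).symm (A.mulVec (p • x + q • y : EuclideanSpace ℝ (Fin n))) + b)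
      = p • ((WithLp.equiv 2 (Fin n → ℝ)).symm (A.mulVec x) + b)
      + q • ((WithLp.equiv 2 (Fin n → ℝ)).symm (A.mulVec y) + b) := by
    ext i
    simp only [PiLp.add_apply, PiLp.smul_apply, WithLp.equiv_symm_apply, PiLp.toLp_apply, smul_eq_mul,
      Matrix.mulVec, dotProduct]
    rw [show (∑ j, A i j * (p * x j + q * y j))
        = p * (∑ j, A i j * x j) + q * (∑ j, A i j * y j) from by
      rw [Finset.mul_sum, Finset.mul_sum, ← Finset.sum_add_distrib]
      exact Finset.sum_congr rfl fun j _ => by ring]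
    linear_combination (b i) * hpq.symm
  have hw' : (∑ j, c j * (p * x j + q * y j)) + δ ≠ 0 := by
    have := hw
    simp only [PiLp.add_apply, PiLp.smul_apply, smul_eq_mul] at this
    exact this
  unfold fracLin
  rw [hN, smul_add, smul_smul, smul_smul, smul_smul, smul_smul]
  congr 1
  · congr 1
    field_simp
  · congr 1
    field_simp

lemma frontier_unique {F : Type*} [NormedAddCommGroup F] [NormedSpace ℝ F]
    {U : Set F} (hO : IsOpen U) (hC : Convex ℝ U) {u v p p' : F}
    (hu : u ∈ U) (hp : p ∈ frontier U) (hp' : p' ∈ frontier U)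
    (h : u ∈ openSegment ℝ p v) (h' : u ∈ openSegment ℝ p' v) : p = p' := by
  have main : ∀ (q q' : F), q ∈ frontier U → q' ∈ frontier U →
      ∀ a a' : ℝ, 0 < a → a < 1 → 0 < a' → a' < 1 →
      a • q + (1-a) • v = u → a' • q' + (1-a') • v = u → a < a' → False := by
    intro q q' hq hq' a a' ha0 ha1 ha0' ha1' hs hs' haa
    have h1a : (0:ℝ) < 1 - a := by linarith
    have hne : a' * (1-a) ≠ 0 := by positivity
    have hkey : (a'-a) • u + (a*(1-a')) • q = (a'*(1-a)) • q' := by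
      linear_combination (norm := module) (1-a') • hs - (1-a) • hs'
    have hpt : ((a'*(1-a))⁻¹ * (a'-a)) • u + ((a'*(1-a))⁻¹ * (a*(1-a'))) • q = q' := by
      rw [← smul_smul, ← smul_smul, ← smul_add, hkey, smul_smul,
        inv_mul_cancel₀ hne, one_smul]
    have hmem : q' ∈ openSegment ℝ u q := by
      refine ⟨(a'*(1-a))⁻¹ * (a'-a), (a'*(1-a))⁻¹ * (a*(1-a')), ?_, ?_, ?_, hpt⟩
      · have : (0:ℝ) < a' - a := by linarith
        positivity
      · have : (0:ℝ) < 1 - a' := by linarith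
        positivity
      · field_simp
        ring
    have hint : q' ∈ interior U :=
      hC.openSegment_interior_closure_subset_interior
        (by rwa [hO.interior_eq]) (frontier_subset_closure hq) hmem
    exact (hO.frontier_eq ▸ hq').2 (hO.interior_eq ▸ hint)
  obtain ⟨a, bb, ha, hbb, hab, hsum⟩ := h
  obtain ⟨a', bb', ha', hbb', hab', hsum'⟩ := h'
  have hb : bb = 1 - a := by linarith
  have hb' : bb' = 1 - a' := by linarith
  subst hb hb'
  have ha1 : a < 1 := by linarith
  have ha1' : a' < 1 := by linarith
  rcases lt_trichotomy a a' with hlt | heq | hgt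
  · exact absurd (main p p' hp hp' a a' ha ha1 ha' ha1' hsum hsum' hlt) (by simp)
  · subst heq
    have : a • p = a • p' := add_right_cancel (hsum.trans hsum'.symm)
    exact smul_right_injective F (ne_of_gt ha) this
  · exact absurd (main p' p hp' hp a' a ha' ha1' ha ha1 hsum' hsum hgt) (by simp)

lemma scalar_aux {lx ly p q : ℝ} (hlxy : 0 < lx * ly) (hp : 0 < p) (hq : 0 < q)
    (hpq : p + q = 1) :
    0 ≤ q * lx / (q * lx + p * ly) ∧ q * lx / (q * lx + p * ly) ≤ 1 ∧
      ((1 - q * lx / (q * lx + p * ly)) * lx + (q * lx / (q * lx + p * ly)) * ly ≠ 0) ∧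
      (1 - q * lx / (q * lx + p * ly)) * lx /
        ((1 - q * lx / (q * lx + p * ly)) * lx + (q * lx / (q * lx + p * ly)) * ly) = p ∧
      (q * lx / (q * lx + p * ly)) * ly /
        ((1 - q * lx / (q * lx + p * ly)) * lx + (q * lx / (q * lx + p * ly)) * ly) = q := by
  have hlx : lx ≠ 0 := fun h => by simp [h] at hlxy
  have hly : ly ≠ 0 := fun h => by simp [h] at hlxy
  have hsame : (0 < lx ∧ 0 < ly) ∨ (lx < 0 ∧ ly < 0) := by
    rcases hlx.lt_or_gt with h1 | h1 <;> rcases hly.lt_or_gt with h2 | h2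
    · exact Or.inr ⟨h1, h2⟩
    · nlinarith
    · nlinarith
    · exact Or.inl ⟨h1, h2⟩
  have hcase : (0 ≤ q * lx ∧ 0 ≤ p * ly ∧ 0 < q * lx + p * ly) ∨
      (q * lx ≤ 0 ∧ p * ly ≤ 0 ∧ q * lx + p * ly < 0) := by
    rcases hsame with ⟨h1, h2⟩ | ⟨h1, h2⟩
    · exact Or.inl ⟨by positivity, by positivity, by nlinarith⟩
    · exact Or.inr ⟨by nlinarith, by nlinarith, by nlinarith⟩
  have hD : q * lx + p * ly ≠ 0 := by
    rcases hcase with ⟨_, _, h3⟩ | ⟨_, _, h3⟩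
    · exact ne_of_gt h3
    · exact ne_of_lt h3
  have h1t : 1 - q * lx / (q * lx + p * ly) = p * ly / (q * lx + p * ly) := by
    field_simp
    ring
  have hE : (1 - q * lx / (q * lx + p * ly)) * lx + (q * lx / (q * lx + p * ly)) * ly
      = lx * ly / (q * lx + p * ly) := by
    rw [h1t]
    field_simp
    linear_combination hpq
  have ht0 : 0 ≤ q * lx / (q * lx + p * ly) := by
    rcases hcase with ⟨h1, _, h3⟩ | ⟨h1, _, h3⟩
    · exact div_nonneg h1 h3.le
    · exact div_nonneg_of_nonpos h1 h3.le
  have h1t0 : 0 ≤ p * ly / (q * lx + p * ly) := by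
    rcases hcase with ⟨_, h2, h3⟩ | ⟨_, h2, h3⟩
    · exact div_nonneg h2 h3.le
    · exact div_nonneg_of_nonpos h2 h3.le
  refine ⟨ht0, by linarith [h1t, h1t0], ?_, ?_, ?_⟩
  · rw [hE]
    exact div_ne_zero (ne_of_gt hlxy) hD
  · rw [hE, h1t, show p * ly / (q * lx + p * ly) * lx
        = p * (lx * ly / (q * lx + p * ly)) from by ring]
    exact mul_div_cancel_right₀ p (div_ne_zero (mul_ne_zero hlx hly) hD)
  · rw [hE, show q * lx / (q * lx + p * ly) * ly
        = q * (lx * ly / (q * lx + p * ly)) from by ring]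
    exact mul_div_cancel_right₀ q (div_ne_zero (mul_ne_zero hlx hly) hD)

end HilbertAux

set_option maxHeartbeats 1000000

/-- a projective transformation whose denominator does not vanish on the
closure of `Ω` maps `Ω` onto a bounded open convex domain and is an isometry for the
Hilbert distances. -/
theorem projective_map_is_hilbert_isometry {n : ℕ}
    (Ω : Set (EuclideanSpace ℝ (Fin n)))
    (hne : Ω.Nonempty) (hO : IsOpen Ω) (hB : Bornology.IsBounded Ω) (hC : Convex ℝ Ω)
    (d₁ : EuclideanSpace ℝ (Fin n) → EuclideanSpace ℝ (Fin n) → ℝ)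
    (hd₁ : IsHilbertDist Ω d₁)
    (A : Matrix (Fin n) (Fin n) ℝ) (b c : EuclideanSpace ℝ (Fin n)) (δ : ℝ)
    (hdet : (projMat A b c δ).det ≠ 0)
    (hden : ∀ x ∈ closure Ω, (∑ i, c i * x i) + δ ≠ 0) :
    (Bornology.IsBounded (fracLin A b c δ '' Ω) ∧ IsOpen (fracLin A b c δ '' Ω) ∧
      Convex ℝ (fracLin A b c δ '' Ω)) ∧
    ∀ d₂ : EuclideanSpace ℝ (Fin n) → EuclideanSpace ℝ (Fin n) → ℝ,
      IsHilbertDist (fracLin A b c δ '' Ω) d₂ →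
      ∀ x ∈ Ω, ∀ y ∈ Ω, d₂ (fracLin A b c δ x) (fracLin A b c δ y) = d₁ x y := by
  classical
  open HilbertAux in
  set f := fracLin A b c δ with hf
  set M := projMat A b c δ with hM
  have hdetU : IsUnit M.det := isUnit_iff_ne_zero.mpr hdet
  set Mi := M⁻¹ with hMi
  have hMiM : Mi * M = 1 := Matrix.nonsing_inv_mul M hdetU
  have hMMi : M * Mi = 1 := Matrix.mul_nonsing_inv M hdetU
  have hLden : ∀ x, HilbertAux.denP M x = (∑ i, c i * x i) + δ :=
    HilbertAux.denP_projMat A b c δ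
  have hfimg : ∀ x, f x = HilbertAux.imgP M x :=
    fun x => (HilbertAux.imgP_projMat A b c δ x).symm
  have hdenM : ∀ x ∈ closure Ω, HilbertAux.denP M x ≠ 0 := fun x hx => by
    rw [hLden]; exact hden x hx
  have hΩsub : Ω ⊆ closure Ω := subset_closure
  have hg : ∀ x ∈ closure Ω, HilbertAux.imgP Mi (f x) = x := fun x hx => by
    rw [hfimg]; exact HilbertAux.imgP_imgP hMiM (hdenM x hx)
  have hgden : ∀ x ∈ closure Ω, HilbertAux.denP Mi (f x) = (HilbertAux.denP M x)⁻¹ :=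
    fun x hx => by rw [hfimg]; exact HilbertAux.denP_imgP hMiM (hdenM x hx)
  have hinj : ∀ x ∈ closure Ω, ∀ y ∈ closure Ω, f x = f y → x = y := by
    intro x hx y hy hxy; rw [← hg x hx, ← hg y hy, hxy]
  -- image description
  have himage : f '' Ω = {y | HilbertAux.denP Mi y ≠ 0} ∩ (HilbertAux.imgP Mi) ⁻¹' Ω := by
    ext y
    constructor
    · rintro ⟨x, hx, rfl⟩
      refine ⟨?_, ?_⟩
      · rw [Set.mem_setOf_eq, hgden x (hΩsub hx)]
        exact inv_ne_zero (hdenM x (hΩsub hx))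
      · rw [Set.mem_preimage, hg x (hΩsub hx)]; exact hx
    · rintro ⟨hy1, hy2⟩
      refine ⟨HilbertAux.imgP Mi y, hy2, ?_⟩
      rw [hfimg]
      exact HilbertAux.imgP_imgP hMMi hy1
  -- openness
  have hopen : IsOpen (f '' Ω) := by
    rw [himage]
    exact (HilbertAux.continuousOn_imgP Mi).isOpen_inter_preimage
      (isOpen_ne.preimage (HilbertAux.continuous_denP Mi)) hO
  -- boundedness
  have hcomp : IsCompact (closure Ω) :=
    Metric.isCompact_of_isClosed_isBounded isClosed_closure hB.closure
  have hfc : ContinuousOn f (closure Ω) := by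
    have h1 : ContinuousOn (HilbertAux.imgP M) (closure Ω) :=
      (HilbertAux.continuousOn_imgP M).mono (fun x hx => hdenM x hx)
    exact h1.congr (fun x _ => hfimg x)
  have hbdd : Bornology.IsBounded (f '' Ω) :=
    ((hcomp.image_of_continuousOn hfc).isBounded).subset
      (Set.image_mono subset_closure)
  -- constancy of the sign of the denominator on closure Ω
  have hLcont : Continuous (fun x : EuclideanSpace ℝ (Fin n) => (∑ i, c i * x i) + δ) := by
    have := HilbertAux.continuous_denP M
    simpa only [funext hLden] using this
  have hpre : IsPreconnected ((fun x : EuclideanSpace ℝ (Fin n) => (∑ i, c i * x i) + δ) '' closure Ω) :=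
    (hC.closure.isPreconnected).image _ hLcont.continuousOn
  have hzero : (0:ℝ) ∉ ((fun x : EuclideanSpace ℝ (Fin n) => (∑ i, c i * x i) + δ) '' closure Ω) := by
    rintro ⟨z, hz, hz0⟩
    exact hden z hz hz0
  have hsign : ∀ x ∈ closure Ω, ∀ y ∈ closure Ω,
      0 < ((∑ i, c i * x i) + δ) * ((∑ i, c i * y i) + δ) := by
    intro x hx y hy
    have hmx := Set.mem_image_of_mem (fun z : EuclideanSpace ℝ (Fin n) => (∑ i, c i * z i) + δ) hx
    have hmy := Set.mem_image_of_mem (fun z : EuclideanSpace ℝ (Fin n) => (∑ i, c i * z i) + δ) hy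
    rcases (hden x hx).lt_or_gt with h1 | h1 <;> rcases (hden y hy).lt_or_gt with h2 | h2
    · nlinarith
    · exact absurd (hpre.ordConnected.out hmx hmy ⟨le_of_lt h1, le_of_lt h2⟩) hzero
    · exact absurd (hpre.ordConnected.out hmy hmx ⟨le_of_lt h2, le_of_lt h1⟩) hzero
    · nlinarith
  -- convexity
  have hconv : Convex ℝ (f '' Ω) := by
    rintro u ⟨x, hx, rfl⟩ w ⟨y, hy, rfl⟩ p q hp hq hpq
    rcases eq_or_lt_of_le hp with hp0 | hp0
    · rw [← hp0, zero_smul, zero_add, show q = 1 by linarith, one_smul]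
      exact Set.mem_image_of_mem f hy
    rcases eq_or_lt_of_le hq with hq0 | hq0
    · rw [← hq0, zero_smul, add_zero, show p = 1 by linarith, one_smul]
      exact Set.mem_image_of_mem f hx
    have hlx : (∑ i, c i * x i) + δ ≠ 0 := hden x (hΩsub hx)
    have hly : (∑ i, c i * y i) + δ ≠ 0 := hden y (hΩsub hy)
    have hxy := hsign x (hΩsub hx) y (hΩsub hy)
    obtain ⟨ht0, ht1, hW, hcoef1, hcoef2⟩ := HilbertAux.scalar_aux hxy hp0 hq0 hpq
    set t := q * ((∑ i, c i * x i) + δ) /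
      (q * ((∑ i, c i * x i) + δ) + p * ((∑ i, c i * y i) + δ)) with htdef
    have hwΩ : (1 - t) • x + t • y ∈ Ω := hC hx hy (by linarith) ht0 (by ring)
    have hLw : (∑ i, c i * ((1 - t) • x + t • y) i) + δ
        = (1 - t) * ((∑ i, c i * x i) + δ) + t * ((∑ i, c i * y i) + δ) :=
      HilbertAux.L_comb c δ (1 - t) t (by ring) x y
    have hLwne : (∑ i, c i * ((1 - t) • x + t • y) i) + δ ≠ 0 := by rw [hLw]; exact hW
    have hcomb := HilbertAux.fracLin_comb A b c δ (1 - t) t (by ring) x y hlx hly hLwne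
    refine ⟨(1 - t) • x + t • y, hwΩ, ?_⟩
    rw [← hf] at hcomb
    rw [hcomb, hLw, hcoef1, hcoef2]
  refine ⟨⟨hbdd, hopen, hconv⟩, ?_⟩
  -- the isometry property
  intro d₂ hd₂ x hx y hy
  rcases eq_or_ne x y with rfl | hxy
  · rw [hd₂.1, hd₁.1]
  have hfxy : f x ≠ f y := fun h => hxy (hinj x (hΩsub hx) y (hΩsub hy) h)
  obtain ⟨xb, hxb, yb, hyb, hxseg, hyseg, hd1eq⟩ := hd₁.2 x hx y hy hxy
  have hlx : (∑ i, c i * x i) + δ ≠ 0 := hden x (hΩsub hx)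
  have hly : (∑ i, c i * y i) + δ ≠ 0 := hden y (hΩsub hy)
  have hlxb : (∑ i, c i * xb i) + δ ≠ 0 := hden xb (frontier_subset_closure hxb)
  have hlyb : (∑ i, c i * yb i) + δ ≠ 0 := hden yb (frontier_subset_closure hyb)
  obtain ⟨a1, b1, ha1, hb1, hab1, hsum1⟩ := hxseg
  obtain ⟨a2, b2, ha2, hb2, hab2, hsum2⟩ := hyseg
  set lam := b1 / a1 with hlam
  set mu := a2 / b2 with hmu
  have hlam0 : 0 < lam := div_pos hb1 ha1
  have hmu0 : 0 < mu := div_pos ha2 hb2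
  -- xb = (1+lam) • x + (-lam) • y
  have hxb2 : xb = (1 + lam) • x + (-lam) • y := by
    refine smul_right_injective _ (ne_of_gt ha1) ?_
    show a1 • xb = a1 • ((1 + lam) • x + (-lam) • y)
    have h1 : a1 * (1 + lam) = a1 + b1 := by rw [hlam]; field_simp
    have h2 : a1 * lam = b1 := by rw [hlam]; field_simp
    rw [smul_add, smul_smul, smul_smul, h1, hab1, mul_neg, h2]
    linear_combination (norm := module) hsum1
  have hyb2 : yb = (-mu) • x + (1 + mu) • y := by
    refine smul_right_injective _ (ne_of_gt hb2) ?_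
    show b2 • yb = b2 • ((-mu) • x + (1 + mu) • y)
    have h1 : b2 * (1 + mu) = b2 + a2 := by rw [hmu]; field_simp
    have h2 : b2 * mu = a2 := by rw [hmu]; field_simp
    rw [smul_add, smul_smul, smul_smul, h1, mul_neg, h2]
    have hab2' : b2 + a2 = 1 := by linarith
    rw [hab2']
    linear_combination (norm := module) hsum2
  -- L-values of the frontier points
  have hLxb : (∑ i, c i * xb i) + δ
      = (1 + lam) * ((∑ i, c i * x i) + δ) + (-lam) * ((∑ i, c i * y i) + δ) := by
    rw [hxb2]; exact HilbertAux.L_comb c δ (1 + lam) (-lam) (by ring) x y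
  have hLyb : (∑ i, c i * yb i) + δ
      = (-mu) * ((∑ i, c i * x i) + δ) + (1 + mu) * ((∑ i, c i * y i) + δ) := by
    rw [hyb2]; exact HilbertAux.L_comb c δ (-mu) (1 + mu) (by ring) x y
  -- images of the frontier points
  have hfxb : f xb = ((1 + lam) * ((∑ i, c i * x i) + δ) / ((∑ i, c i * xb i) + δ)) • f x
      + ((-lam) * ((∑ i, c i * y i) + δ) / ((∑ i, c i * xb i) + δ)) • f y := by
    have := HilbertAux.fracLin_comb A b c δ (1 + lam) (-lam) (by ring) x y hlx hly
      (by rw [← hxb2]; exact hlxb)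
    rw [← hxb2] at this
    exact this
  have hfyb : f yb = ((-mu) * ((∑ i, c i * x i) + δ) / ((∑ i, c i * yb i) + δ)) • f x
      + ((1 + mu) * ((∑ i, c i * y i) + δ) / ((∑ i, c i * yb i) + δ)) • f y := by
    have := HilbertAux.fracLin_comb A b c δ (-mu) (1 + mu) (by ring) x y hlx hly
      (by rw [← hyb2]; exact hlyb)
    rw [← hyb2] at this
    exact this
  set lx := (∑ i, c i * x i) + δ with hlxdef
  set ly := (∑ i, c i * y i) + δ with hlydef
  set lxb := (∑ i, c i * xb i) + δ with hlxbdef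
  set lyb := (∑ i, c i * yb i) + δ with hlybdef
  set lam' := lam * ly / lxb with hlam'
  set mu' := mu * lx / lyb with hmu'
  have hsly_lxb : 0 < ly * lxb := hsign y (hΩsub hy) xb (frontier_subset_closure hxb)
  have hslx_lyb : 0 < lx * lyb := hsign x (hΩsub hx) yb (frontier_subset_closure hyb)
  have hlam'0 : 0 < lam' := by
    rw [hlam', mul_div_assoc]
    have h2 : ly / lxb = (ly * lxb) / (lxb * lxb) := by
      rw [mul_div_mul_right _ _ hlxb]
    have : 0 < ly / lxb := by
      rw [h2]
      apply div_pos hsly_lxb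
      have := mul_self_nonneg lxb
      rcases this.lt_or_eq with h | h
      · exact h
      · exact absurd h.symm (mul_ne_zero hlxb hlxb)
    positivity
  have hmu'0 : 0 < mu' := by
    rw [hmu', mul_div_assoc]
    have h2 : lx / lyb = (lx * lyb) / (lyb * lyb) := by
      rw [mul_div_mul_right _ _ hlyb]
    have : 0 < lx / lyb := by
      rw [h2]
      apply div_pos hslx_lyb
      have := mul_self_nonneg lyb
      rcases this.lt_or_eq with h | h
      · exact h
      · exact absurd h.symm (mul_ne_zero hlyb hlyb)
    positivity
  have hlamco : (1 + lam) * lx / lxb = 1 + lam' := by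
    have h : (1 + lam) * lx = lxb + lam * ly := by linear_combination -hLxb
    rw [hlam', h, add_div, div_self hlxb]
  have hmuco : (1 + mu) * ly / lyb = 1 + mu' := by
    have h : (1 + mu) * ly = lyb + mu * lx := by linear_combination -hLyb
    rw [hmu', h, add_div, div_self hlyb]
  have hs1 : (-lam) * ly / lxb = -lam' := by rw [hlam']; ring
  have hs2 : (-mu) * lx / lyb = -mu' := by rw [hmu']; ring
  have hfxb' : f xb = (1 + lam') • f x + (-lam') • f y := by
    rw [hfxb, hlamco, hs1]
  have hfyb' : f yb = (-mu') • f x + (1 + mu') • f y := by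
    rw [hfyb, hmuco, hs2]
  -- betweenness in the image
  have hc0 : (0:ℝ) < 1 + lam' := by linarith
  have hc1 : (0:ℝ) < 1 + mu' := by linarith
  have hfxseg : f x ∈ openSegment ℝ (f xb) (f y) := by
    refine ⟨(1 + lam')⁻¹, lam' / (1 + lam'), by positivity, by positivity, ?_, ?_⟩
    · field_simp
    · refine smul_right_injective _ (ne_of_gt hc0) ?_
      show (1 + lam') • ((1 + lam')⁻¹ • f xb + (lam' / (1 + lam')) • f y) = (1 + lam') • f x
      rw [smul_add, smul_smul, smul_smul, mul_inv_cancel₀ (ne_of_gt hc0), one_smul,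
        show (1 + lam') * (lam' / (1 + lam')) = lam' by field_simp]
      linear_combination (norm := module) hfxb'
  have hfyseg : f y ∈ openSegment ℝ (f x) (f yb) := by
    refine ⟨mu' / (1 + mu'), (1 + mu')⁻¹, by positivity, by positivity, ?_, ?_⟩
    · field_simp
      ring
    · refine smul_right_injective _ (ne_of_gt hc1) ?_
      show (1 + mu') • ((mu' / (1 + mu')) • f x + (1 + mu')⁻¹ • f yb) = (1 + mu') • f y
      rw [smul_add, smul_smul, smul_smul, mul_inv_cancel₀ (ne_of_gt hc1),
        show (1 + mu') * (mu' / (1 + mu')) = mu' by field_simp, one_smul]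
      linear_combination (norm := module) hfyb'
  -- frontier points of the image
  have hfrontier : ∀ z ∈ frontier Ω, f z ∈ frontier (f '' Ω) := by
    intro z hz
    have hzc : z ∈ closure Ω := frontier_subset_closure hz
    rw [hopen.frontier_eq]
    constructor
    · exact hfc.image_closure (Set.mem_image_of_mem f hzc)
    · rintro ⟨w, hw, hwz⟩
      have := hinj w (hΩsub hw) z hzc hwz
      subst this
      exact (hO.frontier_eq ▸ hz).2 hw
  -- identify the frontier points provided by d₂
  obtain ⟨xb₂, hxb₂, yb₂, hyb₂, hseg1₂, hseg2₂, hd2eq⟩ :=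
    hd₂.2 (f x) (Set.mem_image_of_mem f hx) (f y) (Set.mem_image_of_mem f hy) hfxy
  have hxbeq : xb₂ = f xb :=
    HilbertAux.frontier_unique hopen hconv (Set.mem_image_of_mem f hx) hxb₂
      (hfrontier xb hxb) hseg1₂ hfxseg
  have hybeq : yb₂ = f yb := by
    rw [openSegment_symm] at hseg2₂
    have h2 : f y ∈ openSegment ℝ (f yb) (f x) := by
      rw [openSegment_symm]; exact hfyseg
    exact HilbertAux.frontier_unique hopen hconv (Set.mem_image_of_mem f hy) hyb₂
      (hfrontier yb hyb) hseg2₂ h2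
  -- difference identities and norms
  have hNxy : ‖x - y‖ ≠ 0 := by
    rw [norm_ne_zero_iff, sub_ne_zero]; exact hxy
  have hNfxy : ‖f x - f y‖ ≠ 0 := by
    rw [norm_ne_zero_iff, sub_ne_zero]; exact hfxy
  have e1 : xb - x = lam • (x - y) := by
    linear_combination (norm := module) hxb2
  have e2 : xb - y = (1 + lam) • (x - y) := by
    linear_combination (norm := module) hxb2
  have e3 : yb - y = mu • (y - x) := by
    linear_combination (norm := module) hyb2
  have e4 : yb - x = (1 + mu) • (y - x) := by
    linear_combination (norm := module) hyb2
  have f1 : f xb - f x = lam' • (f x - f y) := by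
    linear_combination (norm := module) hfxb'
  have f2 : f xb - f y = (1 + lam') • (f x - f y) := by
    linear_combination (norm := module) hfxb'
  have f3 : f yb - f y = mu' • (f y - f x) := by
    linear_combination (norm := module) hfyb'
  have f4 : f yb - f x = (1 + mu') • (f y - f x) := by
    linear_combination (norm := module) hfyb'
  have hnyx : ‖y - x‖ = ‖x - y‖ := norm_sub_rev y x
  have hnfyx : ‖f y - f x‖ = ‖f x - f y‖ := norm_sub_rev (f y) (f x)
  rw [hd2eq, hd1eq, hxbeq, hybeq, e1, e2, e3, e4, f1, f2, f3, f4]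
  simp only [norm_smul, Real.norm_eq_abs, hnyx, hnfyx]
  rw [abs_of_pos hlam0, abs_of_pos hmu0, abs_of_pos hlam'0, abs_of_pos hmu'0,
    abs_of_pos (by linarith : (0:ℝ) < 1 + lam), abs_of_pos (by linarith : (0:ℝ) < 1 + mu),
    abs_of_pos hc0, abs_of_pos hc1]
  rw [mul_div_mul_right _ _ hNfxy, mul_div_mul_right _ _ hNfxy,
    mul_div_mul_right _ _ hNxy, mul_div_mul_right _ _ hNxy]
  congr 1
  rw [hlam', hmu']
  have hlam0' : lam ≠ 0 := ne_of_gt hlam0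
  have hmu0' : mu ≠ 0 := ne_of_gt hmu0
  rw [← hlamco, ← hmuco]
  field_simp
end
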